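/- arXiv:0706.0219 — 4 statements merged into one kernel-verified Lean document; each statement's English description precedes it below -/
import Mathlib

section
/- In the finite growth model with no white vertices, for an initially green vertex x, the vertex R produced by the stopped invasion procedure from x (the first initially red vertex invaded) is responsible for x becoming red: when x becomes red, R is the unique initially red vertex of the red cluster containing x. -/
open MeasureTheory ProbabilityTheory Set
open scoped ENNReal

namespace RandomSpatialGrowth

/-- The three possible colours of a vertex of the growth model. -/
inductive Color : Type
  | white : Color
  | red : Color
  | green : Color
  deriving DecidableEq

instance : MeasurableSpace Color := ⊤

/-- A numerical encoding of the colours (used only to state independence). -/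
def Color.code : Color → ℝ
  | Color.white => 0
  | Color.red => 1
  | Color.green => 2

variable {V : Type*}

/-- Edge `e` has at least one green end-vertex at time `t`. -/
def greenTouch (col : ℝ → V → Color) (t : ℝ) (e : Sym2 V) : Prop :=
  ∃ v ∈ e, col t v = Color.green

/-- `u` and `v` are joined by a path of edges of the arena `A` that are all open at time `t`. -/
def openConn {G : SimpleGraph V} (A : G.Subgraph) (opn : ℝ → Sym2 V → Prop) (t : ℝ)
    (u v : V) : Prop :=
  Relation.ReflTransGen (fun a b => A.Adj a b ∧ opn t s(a, b)) u v

/-- A time evolution of the growth process on the arena (subgraph) `A` of `G`, with initial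
colours `c` and opening times `τ`.  `opn t e` says that the edge `e` is open at time `t` and
`col t v` is the colour of the vertex `v` at time `t`.  The axioms characterize the dynamics:
all edges are initially closed and an edge of the arena is open at time `t` iff the set of
earlier (nonnegative) times at which it had at least one green end-vertex has Lebesgue measure
at least `τ e`; instantaneously upon openings, white vertices touched by green become green and
green clusters touching red become red, so that at any time a vertex is red iff it is joined by
open edges to an initially red vertex, and it is white iff it is initially white and no
incident edge has opened. -/
structure Evolution {G : SimpleGraph V} (A : G.Subgraph) (c : V → Color)
    (τ : Sym2 V → ℝ) where
  opn : ℝ → Sym2 V → Prop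
  col : ℝ → V → Color
  open_iff : ∀ t, 0 ≤ t → ∀ e ∈ A.edgeSet,
    (opn t e ↔ ENNReal.ofReal (τ e) ≤ volume {s : ℝ | 0 ≤ s ∧ s < t ∧ greenTouch col s e})
  closed_outside : ∀ (t : ℝ) (e : Sym2 V), e ∉ A.edgeSet → ¬ opn t e
  red_iff : ∀ t, 0 ≤ t → ∀ v ∈ A.verts,
    (col t v = Color.red ↔ ∃ w, openConn A opn t v w ∧ c w = Color.red)
  white_iff : ∀ t, 0 ≤ t → ∀ v ∈ A.verts,
    (col t v = Color.white ↔ c v = Color.white ∧ ∀ w, A.Adj v w → ¬ opn t s(v, w))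

/-- `u` and `v` belong to the same green cluster at time `t`:  they are joined by a path of
open edges all of whose vertices are green at time `t`. -/
def greenConn {G : SimpleGraph V} (A : G.Subgraph) (opn : ℝ → Sym2 V → Prop)
    (col : ℝ → V → Color) (t : ℝ) (u v : V) : Prop :=
  Relation.ReflTransGen
    (fun a b => A.Adj a b ∧ opn t s(a, b) ∧ col t a = Color.green ∧ col t b = Color.green) u v

/-- `u` and `v` belong to the same red cluster at time `t`:  they are joined by a path of
open edges all of whose vertices are red at time `t`. -/
def redConn {G : SimpleGraph V} (A : G.Subgraph) (opn : ℝ → Sym2 V → Prop)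
    (col : ℝ → V → Color) (t : ℝ) (u v : V) : Prop :=
  Relation.ReflTransGen
    (fun a b => A.Adj a b ∧ opn t s(a, b) ∧ col t a = Color.red ∧ col t b = Color.red) u v

/-- The green cluster of `v` just before it becomes red: the union over all times `t ≥ 0`
of the green cluster of `v` at time `t`. -/
def Cg {G : SimpleGraph V} {A : G.Subgraph} {c : V → Color} {τ : Sym2 V → ℝ}
    (ev : Evolution A c τ) (v : V) : Set V :=
  {x | ∃ t, 0 ≤ t ∧ ev.col t v = Color.green ∧ greenConn A ev.opn ev.col t v x}

/-- The initially green vertex `v` becomes red due to the initially red vertex `w` :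
at some time, `v` is red and its red cluster contains `w`. -/
def dueTo {G : SimpleGraph V} {A : G.Subgraph} {c : V → Color} {τ : Sym2 V → ℝ}
    (ev : Evolution A c τ) (v w : V) : Prop :=
  c v = Color.green ∧ c w = Color.red ∧
    ∃ t, 0 ≤ t ∧ ev.col t v = Color.red ∧ redConn A ev.opn ev.col t v w

/-- The set `D(w)` of initially green vertices that become red due to `w`. -/
def Dset {G : SimpleGraph V} {A : G.Subgraph} {c : V → Color} {τ : Sym2 V → ℝ}
    (ev : Evolution A c τ) (w : V) : Set V :=
  {v | dueTo ev v w}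

/-- The vertex `x` becomes red exactly at time `t₀`. -/
def becomesRedAt {G : SimpleGraph V} {A : G.Subgraph} {c : V → Color} {τ : Sym2 V → ℝ}
    (ev : Evolution A c τ) (x : V) (t₀ : ℝ) : Prop :=
  0 ≤ t₀ ∧ ev.col t₀ x = Color.red ∧ ∀ s, 0 ≤ s → s < t₀ → ev.col s x ≠ Color.red

/-- The vertex set of the invasion tree grown from `x` after `n` steps, when the `k`-th
invaded edge is `E k`. -/
def treeVerts (x : V) (E : ℕ → Sym2 V) (n : ℕ) : Set V :=
  {x} ∪ ⋃ k < n, {v : V | v ∈ E k}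

/-- Step `n` of the invasion procedure started at `x` is correct :  among all edges of `G`
having exactly one end-vertex in the current tree, `E n` is the one of minimal `τ`-value. -/
def InvStep (G : SimpleGraph V) (τ : Sym2 V → ℝ) (x : V) (E : ℕ → Sym2 V) (n : ℕ) : Prop :=
  E n ∈ G.edgeSet ∧ (∃! v, v ∈ E n ∧ v ∈ treeVerts x E n) ∧
    ∀ e' ∈ G.edgeSet, (∃! v, v ∈ e' ∧ v ∈ treeVerts x E n) → τ (E n) ≤ τ e'

/-- The edges `E 0, …, E (m-1)` form the stopped invasion procedure from `x` :  at each step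
the external edge of minimal `τ`-value is added to the tree, the procedure stops as soon as an
initially red vertex is added, and `R` is that first (and only) invaded initially red
vertex, added at the last step. -/
def StoppedInvasion (G : SimpleGraph V) (c : V → Color) (τ : Sym2 V → ℝ) (x : V)
    (E : ℕ → Sym2 V) (m : ℕ) (R : V) : Prop :=
  0 < m ∧ (∀ n < m, InvStep G τ x E n) ∧
  (∀ n < m, ∀ v ∈ E n, v ∉ treeVerts x E n → (c v = Color.red ↔ n = m - 1)) ∧
  R ∈ E (m - 1) ∧ R ∉ treeVerts x E (m - 1) ∧ c R = Color.red


section Helpers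

variable {G : SimpleGraph V} {c : V → Color} {τ : Sym2 V → ℝ}

lemma mem_verts_top' (v : V) : v ∈ (⊤ : G.Subgraph).verts := by
  simp

/-- Openness is monotone in time. -/
lemma opn_mono (ev : Evolution (⊤ : G.Subgraph) c τ) {t t' : ℝ} (ht : 0 ≤ t) (htt : t ≤ t')
    {e : Sym2 V} (h : ev.opn t e) : ev.opn t' e := by
  by_cases he : e ∈ (⊤ : G.Subgraph).edgeSet
  · rw [ev.open_iff t ht e he] at h
    rw [ev.open_iff t' (ht.trans htt) e he]
    exact h.trans (measure_mono fun s hs => ⟨hs.1, hs.2.1.trans_le htt, hs.2.2⟩)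
  · exact absurd h (ev.closed_outside t e he)

/-- Redness is monotone in time. -/
lemma red_mono (ev : Evolution (⊤ : G.Subgraph) c τ) {t t' : ℝ} (ht : 0 ≤ t) (htt : t ≤ t')
    {v : V} (h : ev.col t v = Color.red) : ev.col t' v = Color.red := by
  rw [ev.red_iff t ht v (mem_verts_top' v)] at h
  rw [ev.red_iff t' (ht.trans htt) v (mem_verts_top' v)]
  obtain ⟨w, hconn, hw⟩ := h
  exact ⟨w, Relation.ReflTransGen.mono (fun a b hab => ⟨hab.1, opn_mono ev ht htt hab.2⟩) _ _ hconn, hw⟩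

/-- An edge open at time `t ≥ 0` has `τ e ≤ t`. -/
lemma tau_le_of_opn (ev : Evolution (⊤ : G.Subgraph) c τ) {t : ℝ} (ht : 0 ≤ t)
    {e : Sym2 V} (h : ev.opn t e) : τ e ≤ t := by
  by_cases he : e ∈ (⊤ : G.Subgraph).edgeSet
  · rw [ev.open_iff t ht e he] at h
    have h2 : volume {s : ℝ | 0 ≤ s ∧ s < t ∧ greenTouch ev.col s e} ≤ ENNReal.ofReal t := by
      refine le_trans (measure_mono fun s hs => (show s ∈ Ico (0:ℝ) t from ⟨hs.1, hs.2.1⟩)) ?_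
      rw [Real.volume_Ico, sub_zero]
    exact (ENNReal.ofReal_le_ofReal_iff ht).mp (h.trans h2)
  · exact absurd h (ev.closed_outside t e he)

/-- Up to the opening value `τ e` of an open edge, the edge always had a green end. -/
lemma greenTouch_before_tau (hnw : ∀ v, c v ≠ Color.white)
    (ev : Evolution (⊤ : G.Subgraph) c τ) {t : ℝ} (ht : 0 ≤ t)
    {e : Sym2 V} (h : ev.opn t e) : ∀ s, 0 ≤ s → s < τ e → greenTouch ev.col s e := by
  intro s hs0 hsτ
  by_contra hgt
  have he : e ∈ (⊤ : G.Subgraph).edgeSet := by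
    by_contra he; exact ev.closed_outside t e he h
  rw [ev.open_iff t ht e he] at h
  have hsub : {r : ℝ | 0 ≤ r ∧ r < t ∧ greenTouch ev.col r e} ⊆ Ico 0 s := by
    rintro r ⟨hr0, hrt, v, hv, hgreen⟩
    refine ⟨hr0, lt_of_not_ge fun hsr => ?_⟩
    have hvw : ev.col s v ≠ Color.white := fun hw =>
      hnw v ((ev.white_iff s hs0 v (mem_verts_top' v)).mp hw).1
    have hvg : ev.col s v ≠ Color.green := fun hg => hgt ⟨v, hv, hg⟩
    have hvr : ev.col s v = Color.red := by
      cases hc : ev.col s v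
      · exact absurd hc hvw
      · rfl
      · exact absurd hc hvg
    have := red_mono ev hs0 hsr hvr
    rw [this] at hgreen
    exact Color.noConfusion hgreen
  have h2 := (h.trans (measure_mono hsub))
  rw [Real.volume_Ico, sub_zero] at h2
  have := (ENNReal.ofReal_le_ofReal_iff hs0).mp h2
  exact absurd hsτ (not_lt.mpr this)

/-- An edge that is open at some time `t ≥ 0` is open at every time `t' ≥ τ e`. -/
lemma opn_of_tau_le (hτpos : ∀ e ∈ G.edgeSet, 0 < τ e) (hnw : ∀ v, c v ≠ Color.white)
    (ev : Evolution (⊤ : G.Subgraph) c τ) {t : ℝ} (ht : 0 ≤ t)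
    {e : Sym2 V} (h : ev.opn t e) {t' : ℝ} (ht' : τ e ≤ t') : ev.opn t' e := by
  have he : e ∈ (⊤ : G.Subgraph).edgeSet := by
    by_contra he; exact ev.closed_outside t e he h
  have he' : e ∈ G.edgeSet := by rwa [SimpleGraph.Subgraph.edgeSet_top] at he
  have hτe : 0 < τ e := hτpos e he'
  have ht'0 : 0 ≤ t' := hτe.le.trans ht'
  rw [ev.open_iff t' ht'0 e he]
  have hsub : Ico (0:ℝ) (τ e) ⊆ {s : ℝ | 0 ≤ s ∧ s < t' ∧ greenTouch ev.col s e} := by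
    rintro s ⟨hs0, hsτ⟩
    exact ⟨hs0, hsτ.trans_le ht', greenTouch_before_tau hnw ev ht h s hs0 hsτ⟩
  refine le_trans ?_ (measure_mono hsub)
  rw [Real.volume_Ico, sub_zero]

/-- An open path to an initially red vertex is a red path. -/
lemma redConn_of_openConn (ev : Evolution (⊤ : G.Subgraph) c τ) {t : ℝ} (ht : 0 ≤ t)
    {v w : V} (h : openConn (⊤ : G.Subgraph) ev.opn t v w) (hw : c w = Color.red) :
    redConn (⊤ : G.Subgraph) ev.opn ev.col t v w := by
  induction h using Relation.ReflTransGen.head_induction_on with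
  | refl => exact Relation.ReflTransGen.refl
  | head hstep htail ih =>
    rename_i a b'
    refine Relation.ReflTransGen.head ⟨hstep.1, hstep.2, ?_, ?_⟩ ih
    · exact (ev.red_iff t ht a (mem_verts_top' a)).mpr
        ⟨w, Relation.ReflTransGen.head hstep htail, hw⟩
    · exact (ev.red_iff t ht b' (mem_verts_top' b')).mpr ⟨w, htail, hw⟩

/-- Any open connection can be realized at a time which is the `τ`-value of some open edge. -/
lemma exists_tau_time (hτpos : ∀ e ∈ G.edgeSet, 0 < τ e) (hnw : ∀ v, c v ≠ Color.white)
    (ev : Evolution (⊤ : G.Subgraph) c τ) {t : ℝ} (ht : 0 ≤ t) {u v : V}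
    (h : openConn (⊤ : G.Subgraph) ev.opn t u v) :
    u = v ∨ ∃ θ a b, 0 ≤ θ ∧ θ ≤ t ∧ G.Adj a b ∧ ev.opn θ s(a, b) ∧ θ = τ s(a, b) ∧
      openConn (⊤ : G.Subgraph) ev.opn θ u v := by
  induction h with
  | refl => exact Or.inl rfl
  | tail hpq hstep ih =>
    rename_i p q
    obtain ⟨hadj, hopn⟩ := hstep
    have hadj' : G.Adj p q := SimpleGraph.Subgraph.top_adj.mp hadj
    have hepq : s(p, q) ∈ G.edgeSet := G.mem_edgeSet.mpr hadj'
    have hτpq : 0 < τ s(p, q) := hτpos _ hepq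
    have hτle : τ s(p, q) ≤ t := tau_le_of_opn ev ht hopn
    have hopnτ : ev.opn (τ s(p, q)) s(p, q) := opn_of_tau_le hτpos hnw ev ht hopn le_rfl
    rcases ih with rfl | ⟨θ, a, b, hθ0, hθt, hab, hopnab, hθτ, hconn⟩
    · exact Or.inr ⟨τ s(u, q), u, q, hτpq.le, hτle, hadj', hopnτ, rfl,
        Relation.ReflTransGen.single ⟨hadj, hopnτ⟩⟩
    · rcases le_total (τ s(p, q)) θ with hle | hle
      · refine Or.inr ⟨θ, a, b, hθ0, hθt, hab, hopnab, hθτ, ?_⟩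
        exact hconn.tail ⟨hadj, opn_of_tau_le hτpos hnw ev ht hopn hle⟩
      · refine Or.inr ⟨τ s(p, q), p, q, hτpq.le, hτle, hadj', hopnτ, rfl, ?_⟩
        refine Relation.ReflTransGen.tail ?_ ⟨hadj, hopnτ⟩
        refine Relation.ReflTransGen.mono (fun y z hyz => ⟨hyz.1, ?_⟩) _ _ hconn
        exact opn_of_tau_le hτpos hnw ev hθ0 hyz.2
          ((tau_le_of_opn ev hθ0 hyz.2).trans hle)

/-- Splitting a reflexive-transitive path along a distinguished step. -/
lemma rtg_split {α : Type*} {r₁ r₂ : α → α → Prop} {a b u v : α}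
    (h : ∀ p q, r₂ p q → r₁ p q ∨ (p = a ∧ q = b) ∨ (p = b ∧ q = a))
    (huv : Relation.ReflTransGen r₂ u v) :
    Relation.ReflTransGen r₁ u v ∨ Relation.ReflTransGen r₁ a v ∨
      Relation.ReflTransGen r₁ b v := by
  induction huv with
  | refl => exact Or.inl Relation.ReflTransGen.refl
  | tail hp hstep ih =>
    rcases h _ _ hstep with h1 | ⟨hp', rfl⟩ | ⟨hp', rfl⟩
    · rcases ih with h' | h' | h'
      · exact Or.inl (h'.tail h1)
      · exact Or.inr (Or.inl (h'.tail h1))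
      · exact Or.inr (Or.inr (h'.tail h1))
    · exact Or.inr (Or.inr Relation.ReflTransGen.refl)
    · exact Or.inr (Or.inl Relation.ReflTransGen.refl)

/-- A path from inside a set to outside it must cross the boundary. -/
lemma rtg_exit {α : Type*} {r : α → α → Prop} {S : Set α} {u w : α}
    (h : Relation.ReflTransGen r u w) (hu : u ∈ S) (hw : w ∉ S) :
    ∃ a b, r a b ∧ a ∈ S ∧ b ∉ S := by
  induction h with
  | refl => exact absurd hu hw
  | tail hp hstep ih =>
    rename_i p q
    by_cases hpS : p ∈ S
    · exact ⟨p, q, hstep, hpS, hw⟩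
    · exact ih hpS

lemma rtg_symm' {α : Type*} {r : α → α → Prop} (h : Symmetric r) {a b : α}
    (hab : Relation.ReflTransGen r a b) : Relation.ReflTransGen r b a := by
  induction hab with
  | refl => exact Relation.ReflTransGen.refl
  | tail _ hbc ih => exact Relation.ReflTransGen.head (h hbc) ih

/-- Two initially red vertices that are connected by open edges coincide. -/
lemma seed_unique [Finite V] (hnw : ∀ v, c v ≠ Color.white)
    (hτpos : ∀ e ∈ G.edgeSet, 0 < τ e)
    (hτinj : ∀ e ∈ G.edgeSet, ∀ f ∈ G.edgeSet, τ e = τ f → e = f)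
    (ev : Evolution (⊤ : G.Subgraph) c τ) {t : ℝ} (ht : 0 ≤ t) {u v : V}
    (hu : c u = Color.red) (hv : c v = Color.red)
    (h : openConn (⊤ : G.Subgraph) ev.opn t u v) : u = v := by
  classical
  by_contra hne
  -- the set of bad times
  set Bd : Set ℝ := {θ | (∃ e ∈ G.edgeSet, τ e = θ) ∧ 0 ≤ θ ∧
    ∃ p q, c p = Color.red ∧ c q = Color.red ∧ p ≠ q ∧
      openConn (⊤ : G.Subgraph) ev.opn θ p q} with hBd
  have hBdsub : Bd ⊆ τ '' G.edgeSet := by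
    rintro θ ⟨⟨e, he, hτe⟩, -⟩; exact ⟨e, he, hτe⟩
  have hfin : Bd.Finite := (Set.toFinite G.edgeSet).image τ |>.subset hBdsub
  have hne' : Bd.Nonempty := by
    rcases exists_tau_time hτpos hnw ev ht h with rfl | ⟨θ, a, b, hθ0, hθt, hab, hopnab, hθτ, hconn⟩
    · exact absurd rfl hne
    · exact ⟨θ, ⟨s(a, b), G.mem_edgeSet.mpr hab, hθτ.symm⟩, hθ0,
        u, v, hu, hv, hne, hconn⟩
  obtain ⟨θm, hθmBd, hθmmin⟩ := Set.Finite.exists_minimalFor id Bd hfin hne'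
  have hmin : ∀ θ' ∈ Bd, θm ≤ θ' := by
    intro θ' hθ'
    by_contra hlt
    exact hlt (hθmmin hθ' (le_of_not_ge hlt))
  obtain ⟨⟨estar, hestar, hτestar⟩, hθm0, p, q, hp, hq, hpq, hconnpq⟩ := hθmBd
  have hθmpos : 0 < θm := hτestar ▸ hτpos estar hestar
  -- a time t⁻ just before θm
  obtain ⟨tm, htm0, htmlt, hub⟩ : ∃ tm, 0 ≤ tm ∧ tm < θm ∧
      ∀ e ∈ G.edgeSet, τ e < θm → τ e ≤ tm := by
    set F : Set ℝ := {r | (∃ e ∈ G.edgeSet, τ e = r) ∧ r < θm} with hF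
    have hFfin : F.Finite := ((Set.toFinite G.edgeSet).image τ).subset
      (by rintro r ⟨⟨e, he, hτe⟩, -⟩; exact ⟨e, he, hτe⟩)
    rcases Set.eq_empty_or_nonempty F with hFe | hFne
    · refine ⟨θm / 2, by linarith, by linarith, fun e he hlt => ?_⟩
      exact absurd (show τ e ∈ F from ⟨⟨e, he, rfl⟩, hlt⟩) (hFe ▸ notMem_empty _)
    · obtain ⟨r, hrF, hrmax⟩ := Set.Finite.exists_maximalFor id F hFfin hFne
      obtain ⟨⟨e₀, he₀, hτe₀⟩, hrlt⟩ := hrF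
      refine ⟨r, (hτe₀ ▸ (hτpos e₀ he₀)).le, hrlt, fun e he hlt => ?_⟩
      by_contra hgt
      have hmem : τ e ∈ F := ⟨⟨e, he, rfl⟩, hlt⟩
      exact hgt (hrmax hmem (le_of_not_ge hgt))
  -- low connections give a contradiction with minimality
  have hlow : ¬ openConn (⊤ : G.Subgraph) ev.opn tm p q := by
    intro hc
    rcases exists_tau_time hτpos hnw ev htm0 hc with rfl | ⟨θ', a', b', hθ'0, hθ't, hab', hopn', hθ'τ, hconn'⟩
    · exact hpq rfl
    · have hbad : θ' ∈ Bd := ⟨⟨s(a', b'), G.mem_edgeSet.mpr hab', hθ'τ.symm⟩,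
        hθ'0, p, q, hp, hq, hpq, hconn'⟩
      exact absurd (hmin θ' hbad) (not_le.mpr (lt_of_le_of_lt hθ't htmlt))
  -- decompose e*
  induction estar using Sym2.ind with
  | _ a b =>
  have hGab : G.Adj a b := G.mem_edgeSet.mp hestar
  -- symmetric relations
  have hsym1 : Symmetric (fun y z => (⊤ : G.Subgraph).Adj y z ∧ ev.opn tm s(y, z)) := by
    intro y z hyz
    exact ⟨hyz.1.symm, by rw [Sym2.eq_swap]; exact hyz.2⟩
  have hsym2 : Symmetric (fun y z => (⊤ : G.Subgraph).Adj y z ∧ ev.opn θm s(y, z)) := by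
    intro y z hyz
    exact ⟨hyz.1.symm, by rw [Sym2.eq_swap]; exact hyz.2⟩
  by_cases hopenstar : ev.opn θm s(a, b)
  · -- the endpoints of e* are not both red at time tm
    have hnbr : ¬ (ev.col tm a = Color.red ∧ ev.col tm b = Color.red) := by
      rintro ⟨hra, hrb⟩
      obtain ⟨z, hz, hzg⟩ := greenTouch_before_tau hnw ev hθm0 hopenstar tm htm0
        (by rw [hτestar]; exact htmlt)
      rcases Sym2.mem_iff.mp hz with rfl | rfl
      · rw [hra] at hzg; exact Color.noConfusion hzg
      · rw [hrb] at hzg; exact Color.noConfusion hzg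
    -- main symmetric sub-argument
    have main : ∀ a' b', G.Adj a' b' → s(a', b') = s(a, b) →
        ev.col tm a' ≠ Color.red → False := by
      intro a' b' hadj' hee hnr'
      have noseed : ∀ z, c z = Color.red →
          ¬ Relation.ReflTransGen (fun y w => (⊤ : G.Subgraph).Adj y w ∧ ev.opn tm s(y, w)) a' z := by
        intro z hz hcz
        exact hnr' ((ev.red_iff tm htm0 a' (mem_verts_top' a')).mpr ⟨z, hcz, hz⟩)
      have hsplit : ∀ y z, ((⊤ : G.Subgraph).Adj y z ∧ ev.opn θm s(y, z)) →
          ((⊤ : G.Subgraph).Adj y z ∧ ev.opn tm s(y, z)) ∨ (y = a' ∧ z = b') ∨ (y = b' ∧ z = a') := by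
        rintro y z ⟨hyz, hopnyz⟩
        have heyz : s(y, z) ∈ G.edgeSet :=
          G.mem_edgeSet.mpr (SimpleGraph.Subgraph.top_adj.mp hyz)
        have hτyz : τ s(y, z) ≤ θm := tau_le_of_opn ev hθm0 hopnyz
        rcases eq_or_lt_of_le hτyz with heq | hlt
        · have : s(y, z) = s(a', b') := by
            refine hτinj _ heyz _ (hee ▸ hestar) ?_
            rw [heq, hee, hτestar]
          rcases Sym2.eq_iff.mp this with ⟨rfl, rfl⟩ | ⟨rfl, rfl⟩
          · exact Or.inr (Or.inl ⟨rfl, rfl⟩)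
          · exact Or.inr (Or.inr ⟨rfl, rfl⟩)
        · exact Or.inl ⟨hyz, opn_of_tau_le hτpos hnw ev hθm0 hopnyz (hub _ heyz hlt)⟩
      have h1 := rtg_split hsplit hconnpq
      have h2 := rtg_split hsplit (rtg_symm' hsym2 hconnpq)
      rcases h1 with h1 | h1 | h1
      · exact hlow h1
      · exact noseed q hq h1
      rcases h2 with h2 | h2 | h2
      · exact hlow (rtg_symm' hsym1 h2)
      · exact noseed p hp h2
      · exact hlow ((rtg_symm' hsym1 h2).trans h1)
    rcases not_and_or.mp hnbr with hna | hnb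
    · exact main a b hGab rfl hna
    · exact main b a hGab.symm Sym2.eq_swap hnb
  · -- e* is not open at θm, so no step of the path uses value θm
    refine hlow (Relation.ReflTransGen.mono (fun y z hyz => ⟨hyz.1, ?_⟩) _ _ hconnpq)
    obtain ⟨hyz, hopnyz⟩ := hyz
    have heyz : s(y, z) ∈ G.edgeSet :=
      G.mem_edgeSet.mpr (SimpleGraph.Subgraph.top_adj.mp hyz)
    have hτyz : τ s(y, z) ≤ θm := tau_le_of_opn ev hθm0 hopnyz
    rcases eq_or_lt_of_le hτyz with heq | hlt
    · exfalso
      have : s(y, z) = s(a, b) := hτinj _ heyz _ hestar (heq.trans hτestar.symm)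
      rw [this] at hopnyz
      exact hopenstar hopnyz
    · exact opn_of_tau_le hτpos hnw ev hθm0 hopnyz (hub _ heyz hlt)

end Helpers

/-- In the finite growth model with no white vertices, the first initially
red vertex `R` invaded by the stopped invasion procedure from an initially green vertex `x`
is responsible for `x` becoming red:  when `x` becomes red, `R` is the unique initially red
vertex of the red cluster containing `x`. -/
theorem statement7
    {V : Type*} [Fintype V] (G : SimpleGraph V) (hconn : G.Connected)
    (c : V → Color) (hnw : ∀ v, c v ≠ Color.white)
    (hg : ∃ v, c v = Color.green) (hr : ∃ v, c v = Color.red)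
    (τ : Sym2 V → ℝ) (hτpos : ∀ e ∈ G.edgeSet, 0 < τ e)
    (hτinj : ∀ e ∈ G.edgeSet, ∀ f ∈ G.edgeSet, τ e = τ f → e = f)
    (x : V) (hx : c x = Color.green)
    (E : ℕ → Sym2 V) (m : ℕ) (R : V) (hinv : StoppedInvasion G c τ x E m R)
    (ev : Evolution (⊤ : G.Subgraph) c τ) (t₀ : ℝ) (ht₀ : becomesRedAt ev x t₀) :
    redConn (⊤ : G.Subgraph) ev.opn ev.col t₀ x R ∧
      ∀ w, redConn (⊤ : G.Subgraph) ev.opn ev.col t₀ x w → c w = Color.red → w = R := by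
  classical
  obtain ⟨hm, hstep, hredext, hRmem, hRnot, hcR⟩ := hinv
  obtain ⟨ht₀0, hxred, hxnot⟩ := ht₀
  -- the tree contains no initially red vertex
  have treeNoRed : ∀ k, k < m → ∀ v, v ∈ treeVerts x E k → c v ≠ Color.red := by
    intro k
    induction k using Nat.strong_induction_on with
    | _ k ih =>
      intro hk v hv
      rcases hv with hv | hv
      · rw [mem_singleton_iff] at hv
        subst hv
        rw [hx]; exact fun h => Color.noConfusion h
      · simp only [mem_iUnion, mem_setOf_eq] at hv
        obtain ⟨j, hj, hvE⟩ := hv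
        by_cases hvT : v ∈ treeVerts x E j
        · exact ih j hj (hj.trans hk) v hvT
        · intro hcv
          have := (hredext j (hj.trans hk) v hvE hvT).mp hcv
          omega
  -- convert open connections to τ-bounded combinatorial paths
  have path_tau : ∀ t, 0 ≤ t → ∀ y z, openConn (⊤ : G.Subgraph) ev.opn t y z →
      Relation.ReflTransGen (fun p q => G.Adj p q ∧ τ s(p, q) ≤ t) y z := by
    intro t ht y z hc
    exact Relation.ReflTransGen.mono (fun p q hpq =>
      ⟨SimpleGraph.Subgraph.top_adj.mp hpq.1, tau_le_of_opn ev ht hpq.2⟩) _ _ hc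
  -- every invaded edge has τ-value at most t₀
  have hEk_le : ∀ k, k < m → τ (E k) ≤ t₀ := by
    intro k hk
    obtain ⟨w₀, hconn₀, hw₀⟩ := (ev.red_iff t₀ ht₀0 x (mem_verts_top' x)).mp hxred
    have hxT : x ∈ treeVerts x E k := Or.inl rfl
    have hw₀T : w₀ ∉ treeVerts x E k := fun hmem => treeNoRed k hk w₀ hmem hw₀
    obtain ⟨p, q, ⟨hadjpq, hτpq⟩, hpT, hqT⟩ :=
      rtg_exit (path_tau t₀ ht₀0 x w₀ hconn₀) hxT hw₀T
    have hepq : s(p, q) ∈ G.edgeSet := G.mem_edgeSet.mpr hadjpq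
    have huniq : ∃! v, v ∈ s(p, q) ∧ v ∈ treeVerts x E k := by
      refine ⟨p, ⟨Sym2.mem_mk_left p q, hpT⟩, ?_⟩
      rintro y ⟨hy, hyT⟩
      rcases Sym2.mem_iff.mp hy with rfl | rfl
      · rfl
      · exact absurd hyT hqT
    exact ((hstep k hk).2.2 _ hepq huniq).trans hτpq
  -- every invaded edge is open at time t₀
  have hEk_open : ∀ k, k < m → ev.opn t₀ (E k) := by
    intro k hk
    obtain ⟨aIn, ⟨haE, haT⟩, -⟩ := (hstep k hk).2.1
    have hgreen : ∀ s, 0 ≤ s → s < τ (E k) → ev.col s aIn ≠ Color.red := by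
      intro s hs0 hsτ hred'
      obtain ⟨w', hconn', hw'⟩ := (ev.red_iff s hs0 aIn (mem_verts_top' aIn)).mp hred'
      have hw'T : w' ∉ treeVerts x E k := fun hmem => treeNoRed k hk w' hmem hw'
      obtain ⟨p, q, ⟨hadjpq, hτpq⟩, hpT, hqT⟩ :=
        rtg_exit (path_tau s hs0 aIn w' hconn') haT hw'T
      have hepq : s(p, q) ∈ G.edgeSet := G.mem_edgeSet.mpr hadjpq
      have huniq : ∃! v, v ∈ s(p, q) ∧ v ∈ treeVerts x E k := by
        refine ⟨p, ⟨Sym2.mem_mk_left p q, hpT⟩, ?_⟩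
        rintro y ⟨hy, hyT⟩
        rcases Sym2.mem_iff.mp hy with rfl | rfl
        · rfl
        · exact absurd hyT hqT
      have := ((hstep k hk).2.2 _ hepq huniq).trans hτpq
      exact absurd hsτ (not_lt.mpr this)
    have heE : E k ∈ (⊤ : G.Subgraph).edgeSet := by
      rw [SimpleGraph.Subgraph.edgeSet_top]; exact (hstep k hk).1
    rw [ev.open_iff t₀ ht₀0 (E k) heE]
    have hsub : Ico (0:ℝ) (τ (E k)) ⊆
        {s : ℝ | 0 ≤ s ∧ s < t₀ ∧ greenTouch ev.col s (E k)} := by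
      rintro s ⟨hs0, hsτ⟩
      refine ⟨hs0, hsτ.trans_le (hEk_le k hk), aIn, haE, ?_⟩
      have h1 : ev.col s aIn ≠ Color.red := hgreen s hs0 hsτ
      have h2 : ev.col s aIn ≠ Color.white := fun hw =>
        hnw aIn ((ev.white_iff s hs0 aIn (mem_verts_top' aIn)).mp hw).1
      cases hc : ev.col s aIn
      · exact absurd hc h2
      · exact absurd hc h1
      · rfl
    refine le_trans ?_ (measure_mono hsub)
    rw [Real.volume_Ico, sub_zero]
  -- all tree vertices are open-connected to x at time t₀
  have treeConn : ∀ k, k ≤ m → ∀ v, v ∈ treeVerts x E k →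
      openConn (⊤ : G.Subgraph) ev.opn t₀ x v := by
    intro k
    induction k with
    | zero =>
      intro _ v hv
      rcases hv with hv | hv
      · rw [mem_singleton_iff] at hv; subst hv; exact Relation.ReflTransGen.refl
      · simp at hv
    | succ k ih =>
      intro hk1 v hv
      rcases hv with hv | hv
      · rw [mem_singleton_iff] at hv; subst hv; exact Relation.ReflTransGen.refl
      · simp only [mem_iUnion, mem_setOf_eq] at hv
        obtain ⟨j, hj, hvE⟩ := hv
        rcases Nat.lt_succ_iff_lt_or_eq.mp hj with hjk | rfl
        · exact ih (Nat.le_of_succ_le hk1) v (Or.inr (by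
            simp only [mem_iUnion, mem_setOf_eq]; exact ⟨j, hjk, hvE⟩))
        · have hjm : j < m := hk1
          obtain ⟨aIn, ⟨haE, haT⟩, -⟩ := (hstep j hjm).2.1
          have hxa : openConn (⊤ : G.Subgraph) ev.opn t₀ x aIn :=
            ih (Nat.le_of_succ_le hk1) aIn haT
          by_cases hva : v = aIn
          · subst hva; exact hxa
          · have heq : E j = s(aIn, v) :=
              (Sym2.mem_and_mem_iff (fun h => hva h.symm)).mp ⟨haE, hvE⟩
            have hadj : G.Adj aIn v := by
              have := (hstep j hjm).1
              rw [heq] at this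
              exact G.mem_edgeSet.mp this
            refine hxa.tail ⟨SimpleGraph.Subgraph.top_adj.mpr hadj, ?_⟩
            rw [← heq]
            exact hEk_open j hjm
  -- R is open-connected to x at time t₀
  have hxR : openConn (⊤ : G.Subgraph) ev.opn t₀ x R := by
    refine treeConn m le_rfl R (Or.inr ?_)
    simp only [mem_iUnion, mem_setOf_eq]
    exact ⟨m - 1, Nat.sub_lt hm Nat.one_pos, hRmem⟩
  refine ⟨redConn_of_openConn ev ht₀0 hxR hcR, ?_⟩
  intro w hw hcw
  have hxw : openConn (⊤ : G.Subgraph) ev.opn t₀ x w :=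
    Relation.ReflTransGen.mono (fun p q hpq => ⟨hpq.1, hpq.2.1⟩) _ _ hw
  have hsym : Symmetric (fun y z => (⊤ : G.Subgraph).Adj y z ∧ ev.opn t₀ s(y, z)) := by
    intro y z hyz
    exact ⟨hyz.1.symm, by rw [Sym2.eq_swap]; exact hyz.2⟩
  have hwR : openConn (⊤ : G.Subgraph) ev.opn t₀ w R :=
    (rtg_symm' hsym hxw).trans hxR
  exact seed_unique hnw hτpos hτinj ev ht₀0 hcw hcR hwR
end RandomSpatialGrowth
end

section
/- In the finite growth model with no white vertices, for an initially green vertex x: x becomes red exactly at time τ*, the maximal τ-value of an edge of the stopped-invasion tree T(x); moreover C_g(x), the green cluster of x just before it becomes red, equals the vertex set of T_1*(x), the component of x in T(x) after deleting the edge e* that attains τ*. -/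
open MeasureTheory ProbabilityTheory Set
open scoped ENNReal

namespace RandomSpatialGrowth

variable {V : Type*}

/-- In the finite growth model with no white vertices, an initially green
vertex `x` becomes red exactly at time `τ*`, the maximal `τ`-value of an edge of the stopped
invasion tree `T(x)`, and `C_g(x)` equals the vertex set of the component `T₁*(x)` of `x` in
`T(x)` with the maximal edge `e*` removed. -/
theorem statement8
    {V : Type*} [Fintype V] (G : SimpleGraph V) (hconn : G.Connected)
    (c : V → Color) (hnw : ∀ v, c v ≠ Color.white)
    (hg : ∃ v, c v = Color.green) (hr : ∃ v, c v = Color.red)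
    (τ : Sym2 V → ℝ) (hτpos : ∀ e ∈ G.edgeSet, 0 < τ e)
    (hτinj : ∀ e ∈ G.edgeSet, ∀ f ∈ G.edgeSet, τ e = τ f → e = f)
    (x : V) (hx : c x = Color.green)
    (E : ℕ → Sym2 V) (m : ℕ) (R : V) (hinv : StoppedInvasion G c τ x E m R)
    (ev : Evolution (⊤ : G.Subgraph) c τ)
    (N : ℕ) (hN : N < m) (hmax : ∀ k < m, τ (E k) ≤ τ (E N)) :
    becomesRedAt ev x (τ (E N)) ∧
      Cg ev x = {y | Relation.ReflTransGen
        (fun a b => ∃ k < m, k ≠ N ∧ E k = s(a, b)) x y} := by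
  
  classical
  obtain ⟨hm, hstep, hstop, hRmem, hRnot, hRred⟩ := hinv
  -- basic subgraph facts
  have hAedge : ∀ e : Sym2 V, e ∈ (⊤ : G.Subgraph).edgeSet ↔ e ∈ G.edgeSet := by
    intro e
    induction e using Sym2.ind with
    | _ a b => simp [SimpleGraph.Subgraph.mem_edgeSet, SimpleGraph.mem_edgeSet]
  have hverts : ∀ v : V, v ∈ (⊤ : G.Subgraph).verts := by
    simp [SimpleGraph.Subgraph.verts_top]
  -- tree vertex facts
  have hxW : ∀ n, x ∈ treeVerts x E n := fun n => Set.mem_union_left _ rfl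
  have hWmono : ∀ {n n' : ℕ}, n ≤ n' → treeVerts x E n ⊆ treeVerts x E n' := by
    intro n n' h v hv
    rcases hv with hv | hv
    · exact Or.inl hv
    · right
      simp only [Set.mem_iUnion] at hv ⊢
      obtain ⟨k, hk, hvk⟩ := hv
      exact ⟨k, lt_of_lt_of_le hk h, hvk⟩
  have hEW : ∀ j n, j < n → ∀ v, v ∈ E j → v ∈ treeVerts x E n := by
    intro j n hj v hv
    right
    simp only [Set.mem_iUnion]
    exact ⟨j, hj, hv⟩
  have hWcases : ∀ n v, v ∈ treeVerts x E n → v = x ∨ ∃ j, j < n ∧ v ∈ E j := by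
    intro n v hv
    rcases hv with hv | hv
    · left; exact hv
    · right; simpa using hv
  have hadj_of_eq : ∀ k, k < m → ∀ a b : V, E k = s(a, b) → G.Adj a b := by
    intro k hk a b he
    have h1 := (hstep k hk).1
    rw [he] at h1
    exact h1
  have hrep : ∀ e : Sym2 V, ∃ a b : V, e = s(a, b) := by
    intro e
    induction e using Sym2.ind with
    | _ a b => exact ⟨a, b, rfl⟩
  have hEdist : ∀ j k, j < k → k < m → E j ≠ E k := by
    intro j k hjk hk heq
    obtain ⟨a, b, hab⟩ := hrep (E k)
    have hadj := hadj_of_eq k hk a b hab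
    have haE : a ∈ E k := by rw [hab]; exact Sym2.mem_mk_left a b
    have hbE : b ∈ E k := by rw [hab]; exact Sym2.mem_mk_right a b
    have haW : a ∈ treeVerts x E k := hEW j k hjk a (by rw [heq]; exact haE)
    have hbW : b ∈ treeVerts x E k := hEW j k hjk b (by rw [heq]; exact hbE)
    obtain ⟨u, hu, huniq⟩ := (hstep k hk).2.1
    exact hadj.ne ((huniq a ⟨haE, haW⟩).trans (huniq b ⟨hbE, hbW⟩).symm)
  have hGreen : ∀ k, k < m → ∀ v, v ∈ treeVerts x E k → c v = Color.green := by
    intro k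
    induction k using Nat.strong_induction_on with
    | _ k ih =>
      intro hk v hv
      rcases hWcases k v hv with rfl | ⟨j, hj, hvj⟩
      · exact hx
      · by_cases hvW : v ∈ treeVerts x E j
        · exact ih j hj (lt_trans hj hk) v hvW
        · have hnr : ¬ c v = Color.red := by
            intro hcv
            have hjm : j = m - 1 := (hstop j (lt_trans hj hk) v hvj hvW).mp hcv
            omega
          cases hcv : c v with
          | white => exact absurd hcv (hnw v)
          | red => exact absurd hcv hnr
          | green => rfl
  have hnotW_red : ∀ k, k < m → ∀ w, c w = Color.red → w ∉ treeVerts x E k := by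
    intro k hk w hw hmem
    have := hGreen k hk w hmem
    rw [hw] at this
    exact Color.noConfusion this
  -- crossing lemma
  have hcross : ∀ {r : V → V → Prop} {S : Set V} {v w : V},
      Relation.ReflTransGen r v w → v ∈ S → w ∉ S → ∃ a b, a ∈ S ∧ b ∉ S ∧ r a b := by
    intro r S v w h hv
    induction h with
    | refl => exact fun hw => absurd hv hw
    | @tail b d h1 h2 ih =>
      intro hw
      by_cases hb : b ∈ S
      · exact ⟨b, d, hb, hw, h2⟩
      · exact ih hb
  -- basic dynamics facts
  have hopen_le : ∀ t : ℝ, 0 ≤ t → ∀ e, ev.opn t e → e ∈ G.edgeSet ∧ τ e ≤ t := by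
    intro t ht e hop
    have he : e ∈ G.edgeSet := by
      by_contra hne
      exact ev.closed_outside t e (fun hmem => hne ((hAedge e).mp hmem)) hop
    refine ⟨he, ?_⟩
    have h1 := (ev.open_iff t ht e ((hAedge e).mpr he)).mp hop
    have h2 : volume {s : ℝ | 0 ≤ s ∧ s < t ∧ greenTouch ev.col s e} ≤ volume (Set.Ico 0 t) :=
      measure_mono (fun s hs => ⟨hs.1, hs.2.1⟩)
    rw [Real.volume_Ico, sub_zero] at h2
    exact (ENNReal.ofReal_le_ofReal_iff ht).mp (le_trans h1 h2)
  have hgreen_iff : ∀ t : ℝ, 0 ≤ t → ∀ v : V,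
      (ev.col t v = Color.green ↔ ¬ ev.col t v = Color.red) := by
    intro t ht v
    have hnwv : ¬ ev.col t v = Color.white := by
      intro h
      exact hnw v ((ev.white_iff t ht v (hverts v)).mp h).1
    constructor
    · intro hg hr
      rw [hg] at hr
      exact Color.noConfusion hr
    · intro hnr
      cases h : ev.col t v with
      | white => exact absurd h hnwv
      | red => exact absurd h hnr
      | green => rfl
  have hboundary : ∀ k, k < m → ∀ a b : V, a ∈ treeVerts x E k → b ∉ treeVerts x E k →
      G.Adj a b → τ (E k) ≤ τ s(a, b) := by
    intro k hk a b ha hb hadj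
    refine (hstep k hk).2.2 s(a, b) (G.mem_edgeSet.mpr hadj) ?_
    refine ⟨a, ⟨Sym2.mem_mk_left a b, ha⟩, ?_⟩
    rintro z ⟨hz1, hz2⟩
    rcases Sym2.mem_iff.mp hz1 with rfl | rfl
    · rfl
    · exact absurd hz2 hb
  have hprotect : ∀ k, k < m → ∀ t : ℝ, 0 ≤ t → t < τ (E k) →
      ∀ v, v ∈ treeVerts x E k → ¬ ev.col t v = Color.red := by
    intro k hk t ht htk v hv hred
    obtain ⟨w, hconn', hw⟩ := (ev.red_iff t ht v (hverts v)).mp hred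
    have hwW : w ∉ treeVerts x E k := hnotW_red k hk w hw
    obtain ⟨a, b, ha, hb, hr⟩ := hcross hconn' hv hwW
    have hadj : G.Adj a b := SimpleGraph.Subgraph.top_adj.mp hr.1
    have h1 := hboundary k hk a b ha hb hadj
    have h2 := (hopen_le t ht s(a, b) hr.2).2
    linarith
  have hEopen : ∀ k, k < m → ∀ t : ℝ, τ (E k) ≤ t → ev.opn t (E k) := by
    intro k hk t htk
    have hpos : 0 < τ (E k) := hτpos _ (hstep k hk).1
    have ht : 0 ≤ t := le_trans hpos.le htk
    refine (ev.open_iff t ht (E k) ((hAedge _).mpr (hstep k hk).1)).mpr ?_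
    obtain ⟨u, ⟨huE, huW⟩, _⟩ := (hstep k hk).2.1
    have hsub : Set.Ico (0 : ℝ) (τ (E k)) ⊆
        {s : ℝ | 0 ≤ s ∧ s < t ∧ greenTouch ev.col s (E k)} := by
      rintro s ⟨hs0, hs1⟩
      exact ⟨hs0, lt_of_lt_of_le hs1 htk, u, huE,
        (hgreen_iff s hs0 u).mpr (hprotect k hk s hs0 hs1 u huW)⟩
    calc ENNReal.ofReal (τ (E k)) = volume (Set.Ico (0 : ℝ) (τ (E k))) := by
          rw [Real.volume_Ico, sub_zero]
      _ ≤ _ := measure_mono hsub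
  have hopn_mono : ∀ t t' : ℝ, 0 ≤ t → t ≤ t' → ∀ e, ev.opn t e → ev.opn t' e := by
    intro t t' ht htt e hop
    have he := (hopen_le t ht e hop).1
    have ht' : 0 ≤ t' := le_trans ht htt
    refine (ev.open_iff t' ht' e ((hAedge e).mpr he)).mpr ?_
    refine le_trans ((ev.open_iff t ht e ((hAedge e).mpr he)).mp hop) (measure_mono ?_)
    rintro s ⟨h1, h2, h3⟩
    exact ⟨h1, lt_of_lt_of_le h2 htt, h3⟩
  have hred_mono : ∀ t t' : ℝ, 0 ≤ t → t ≤ t' → ∀ v,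
      ev.col t v = Color.red → ev.col t' v = Color.red := by
    intro t t' ht htt v hv
    obtain ⟨w, hc, hw⟩ := (ev.red_iff t ht v (hverts v)).mp hv
    refine (ev.red_iff t' (le_trans ht htt) v (hverts v)).mpr ⟨w, ?_, hw⟩
    exact Relation.ReflTransGen.mono (p := fun a b => (⊤ : G.Subgraph).Adj a b ∧ ev.opn t' s(a, b)) (fun a b hab => ⟨hab.1, hopn_mono t t' ht htt _ hab.2⟩) v w hc
  have htstar0 : 0 < τ (E N) := hτpos _ (hstep N hN).1
  have hm1 : m - 1 < m := Nat.sub_lt hm one_pos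
  -- the tree is openly connected at time τ (E N)
  have htreeConn : ∀ n, n ≤ m → ∀ y, y ∈ treeVerts x E n →
      openConn (⊤ : G.Subgraph) ev.opn (τ (E N)) x y := by
    intro n
    induction n with
    | zero =>
      intro _ y hy
      rcases hWcases 0 y hy with rfl | ⟨j, hj, _⟩
      · exact Relation.ReflTransGen.refl
      · exact absurd hj (Nat.not_lt_zero j)
    | succ n ih =>
      intro hn y hy
      rcases hWcases (n + 1) y hy with rfl | ⟨j, hj, hyE⟩
      · exact Relation.ReflTransGen.refl
      · have hjm : j < m := lt_of_lt_of_le hj hn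
        obtain ⟨u, ⟨huE, huW⟩, _⟩ := (hstep j hjm).2.1
        have hxu := ih (Nat.le_of_succ_le hn) u (hWmono (Nat.lt_succ_iff.mp hj) huW)
        by_cases hyu : y = u
        · rw [hyu]; exact hxu
        · have hEj : E j = s(u, y) := (Sym2.mem_and_mem_iff fun h => hyu h.symm).mp ⟨huE, hyE⟩
          refine hxu.tail ⟨SimpleGraph.Subgraph.top_adj.mpr (hadj_of_eq j hjm u y hEj), ?_⟩
          rw [← hEj]
          exact hEopen j hjm _ (hmax j hjm)
  have hxred : ev.col (τ (E N)) x = Color.red := by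
    obtain ⟨u, ⟨huE, huW⟩, _⟩ := (hstep (m - 1) hm1).2.1
    have hxu := htreeConn (m - 1) (Nat.sub_le m 1) u huW
    have huR : u ≠ R := fun h => hRnot (h ▸ huW)
    have hE1 : E (m - 1) = s(u, R) := (Sym2.mem_and_mem_iff huR).mp ⟨huE, hRmem⟩
    have hconn2 : openConn (⊤ : G.Subgraph) ev.opn (τ (E N)) x R := by
      refine hxu.tail ⟨SimpleGraph.Subgraph.top_adj.mpr (hadj_of_eq _ hm1 u R hE1), ?_⟩
      rw [← hE1]
      exact hEopen (m - 1) hm1 _ (hmax (m - 1) hm1)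
    exact (ev.red_iff (τ (E N)) htstar0.le x (hverts x)).mpr ⟨R, hconn2, hRred⟩
  -- the reachable set equals treeVerts x E N
  have hReach_sub : ∀ y, Relation.ReflTransGen
      (fun a b => ∃ k < m, k ≠ N ∧ E k = s(a, b)) x y → y ∈ treeVerts x E N := by
    intro y h
    induction h with
    | refl => exact hxW N
    | @tail b d h1 h2 ih =>
      obtain ⟨k, hk, hkN, hEk⟩ := h2
      have hadj : G.Adj b d := hadj_of_eq k hk b d hEk
      rcases lt_or_gt_of_ne hkN with hlt | hgt
      · exact hEW k N hlt d (by rw [hEk]; exact Sym2.mem_mk_right b d)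
      · by_contra hdW
        have hbk : b ∈ treeVerts x E k := hWmono (le_of_lt hgt) ih
        have hdk : d ∉ treeVerts x E k := by
          intro hdk
          obtain ⟨u, hu, huniq⟩ := (hstep k hk).2.1
          have h1' := huniq b ⟨by rw [hEk]; exact Sym2.mem_mk_left b d, hbk⟩
          have h2' := huniq d ⟨by rw [hEk]; exact Sym2.mem_mk_right b d, hdk⟩
          exact hadj.ne (h1'.trans h2'.symm)
        have hb1 := hboundary N hN b d ih hdW hadj
        rw [← hEk] at hb1
        have heq : τ (E N) = τ (E k) := le_antisymm hb1 (hmax k hk)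
        exact hEdist N k hgt hk (hτinj (E N) (hstep N hN).1 (E k) (hstep k hk).1 heq)
  have hW_sub_reach : ∀ n, n ≤ N → ∀ y, y ∈ treeVerts x E n →
      Relation.ReflTransGen (fun a b => ∃ k < m, k ≠ N ∧ E k = s(a, b)) x y := by
    intro n
    induction n with
    | zero =>
      intro _ y hy
      rcases hWcases 0 y hy with rfl | ⟨j, hj, _⟩
      · exact Relation.ReflTransGen.refl
      · exact absurd hj (Nat.not_lt_zero j)
    | succ n ih =>
      intro hn y hy
      rcases hWcases (n + 1) y hy with rfl | ⟨j, hj, hyE⟩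
      · exact Relation.ReflTransGen.refl
      · have hjN : j < N := lt_of_lt_of_le hj hn
        have hjm : j < m := lt_trans hjN hN
        obtain ⟨u, ⟨huE, huW⟩, _⟩ := (hstep j hjm).2.1
        have hxu := ih (Nat.le_of_succ_le hn) u (hWmono (Nat.lt_succ_iff.mp hj) huW)
        by_cases hyu : y = u
        · rw [hyu]; exact hxu
        · exact hxu.tail ⟨j, hjm, Nat.ne_of_lt hjN,
            (Sym2.mem_and_mem_iff fun h => hyu h.symm).mp ⟨huE, hyE⟩⟩
  -- C_g(x) ⊆ treeVerts x E N
  have hCg_sub : Cg ev x ⊆ treeVerts x E N := by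
    rintro y ⟨t, ht0, hgx, hcon⟩
    have htlt : t < τ (E N) := by
      by_contra hge
      push_neg at hge
      have hxr := hred_mono (τ (E N)) t htstar0.le hge x hxred
      rw [hgx] at hxr
      exact Color.noConfusion hxr
    by_contra hyW
    obtain ⟨a, b, ha, hb, hr⟩ := hcross hcon (hxW N) hyW
    have hadj := SimpleGraph.Subgraph.top_adj.mp hr.1
    have h1 := hboundary N hN a b ha hb hadj
    have h2 := (hopen_le t ht0 s(a, b) hr.2.1).2
    linarith
  -- treeVerts x E N ⊆ C_g(x)
  set Fs : Finset ℝ := insert 0 ((Finset.range N).image fun k => τ (E k)) with hFs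
  have hFs_ne : Fs.Nonempty := ⟨0, Finset.mem_insert_self _ _⟩
  set T := Fs.max' hFs_ne with hT
  have hT0 : 0 ≤ T := Finset.le_max' _ 0 (Finset.mem_insert_self _ _)
  have hTk : ∀ k, k < N → τ (E k) ≤ T := by
    intro k hk
    exact Finset.le_max' Fs _
      (Finset.mem_insert_of_mem (Finset.mem_image.mpr ⟨k, Finset.mem_range.mpr hk, rfl⟩))
  have hTlt : T < τ (E N) := by
    rw [hT]
    refine (Finset.max'_lt_iff _ hFs_ne).mpr ?_
    intro b hb
    rcases Finset.mem_insert.mp hb with rfl | hb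
    · exact htstar0
    · obtain ⟨k, hk, rfl⟩ := Finset.mem_image.mp hb
      have hkN := Finset.mem_range.mp hk
      have hkm : k < m := lt_trans hkN hN
      refine lt_of_le_of_ne (hmax k hkm) ?_
      intro heq
      exact hEdist k N hkN hN (hτinj (E k) (hstep k hkm).1 (E N) (hstep N hN).1 heq)
  have hWgreenT : ∀ v, v ∈ treeVerts x E N → ev.col T v = Color.green := fun v hv =>
    (hgreen_iff T hT0 v).mpr (hprotect N hN T hT0 hTlt v hv)
  have hTconn : ∀ n, n ≤ N → ∀ y, y ∈ treeVerts x E n →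
      greenConn (⊤ : G.Subgraph) ev.opn ev.col T x y := by
    intro n
    induction n with
    | zero =>
      intro _ y hy
      rcases hWcases 0 y hy with rfl | ⟨j, hj, _⟩
      · exact Relation.ReflTransGen.refl
      · exact absurd hj (Nat.not_lt_zero j)
    | succ n ih =>
      intro hn y hy
      rcases hWcases (n + 1) y hy with rfl | ⟨j, hj, hyE⟩
      · exact Relation.ReflTransGen.refl
      · have hjN : j < N := lt_of_lt_of_le hj hn
        have hjm : j < m := lt_trans hjN hN
        obtain ⟨u, ⟨huE, huW⟩, _⟩ := (hstep j hjm).2.1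
        have hxu := ih (Nat.le_of_succ_le hn) u (hWmono (Nat.lt_succ_iff.mp hj) huW)
        by_cases hyu : y = u
        · rw [hyu]; exact hxu
        · have hEj : E j = s(u, y) := (Sym2.mem_and_mem_iff fun h => hyu h.symm).mp ⟨huE, hyE⟩
          refine hxu.tail ⟨SimpleGraph.Subgraph.top_adj.mpr (hadj_of_eq j hjm u y hEj),
            ?_, ?_, ?_⟩
          · rw [← hEj]
            exact hEopen j hjm T (hTk j hjN)
          · exact hWgreenT u (hWmono hjN.le huW)
          · exact hWgreenT y (hEW j N hjN y hyE)
  have hsub_Cg : ∀ y, y ∈ treeVerts x E N → y ∈ Cg ev x := fun y hy =>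
    ⟨T, hT0, hWgreenT x (hxW N), hTconn N le_rfl y hy⟩
  refine ⟨⟨htstar0.le, hxred, fun s hs hst => hprotect N hN s hs hst x (hxW N)⟩, ?_⟩
  ext y
  constructor
  · intro hy
    exact hW_sub_reach N le_rfl y (hCg_sub hy)
  · intro hy
    exact hsub_Cg y (hReach_sub y hy)
end RandomSpatialGrowth
end

section
/- In the finite growth model with no white vertices, for an initially green vertex x, let T̂(x) be the subgraph induced on the vertex set of the stopped-invasion tree T(x) (all edges of G with both end-vertices in T(x)), and let Ē be the set of edges of G with exactly one end-vertex in T(x), that end-vertex different from R. Then the pair (T̂(x), Ē) is autonomous with respect to the given colours and τ-values. -/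
open MeasureTheory ProbabilityTheory Set
open scoped ENNReal

namespace RandomSpatialGrowth

variable {V : Type*}

/-- The pair `(H, Ebar)` — a subgraph `H` of `G` with finite vertex set together with a set
`Ebar` of edges of `G` having exactly one end-vertex in `H` — is autonomous for the initial
colours `c` and opening times `τ` :  for every finite subgraph `G₀` of `G` containing `H` and
all the edges of `Ebar`, the growth process on `G₀`, restricted to `H`, always has the same
time evolution, which does not depend on the colours and `τ`-values outside of `H` and `Ebar`. -/
def Autonomous (G : SimpleGraph V) (c : V → Color) (τ : Sym2 V → ℝ)
    (H : G.Subgraph) (Ebar : Set (Sym2 V)) : Prop :=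
  H.verts.Finite ∧ Ebar.Finite ∧
  (∀ e ∈ Ebar, e ∈ G.edgeSet ∧ ∃! v, v ∈ e ∧ v ∈ H.verts) ∧
  ∃ (colH : ℝ → V → Color) (opnH : ℝ → Sym2 V → Prop),
    ∀ G₀ : G.Subgraph, G₀.verts.Finite → H ≤ G₀ → Ebar ⊆ G₀.edgeSet →
      ∀ (c' : V → Color) (τ' : Sym2 V → ℝ),
        (∀ v ∈ H.verts, c' v = c v) →
        (∀ e ∈ H.edgeSet ∪ Ebar, τ' e = τ e) →
        ∀ ev : Evolution G₀ c' τ',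
          (∀ t, 0 ≤ t → ∀ v ∈ H.verts, ev.col t v = colH t v) ∧
          (∀ t, 0 ≤ t → ∀ e ∈ H.edgeSet, (ev.opn t e ↔ opnH t e))

section Statement9Aux

variable {V : Type*}

private lemma sym2_cases (e : Sym2 V) : ∃ a b : V, e = s(a, b) := by
  induction e using Sym2.ind with
  | _ a b => exact ⟨a, b, rfl⟩

/-- The larger of the two values of `ρ` at the end-vertices of an edge. -/
private noncomputable def Mfun (ρ : V → ℝ) : Sym2 V → ℝ :=
  Sym2.lift ⟨fun p q => max (ρ p) (ρ q), fun _ _ => max_comm _ _⟩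

@[simp] private lemma Mfun_mk (ρ : V → ℝ) (p q : V) :
    Mfun ρ s(p, q) = max (ρ p) (ρ q) := Sym2.lift_mk _ _ _

private lemma mem_treeVerts_iff {x : V} {E : ℕ → Sym2 V} {v : V} {n : ℕ} :
    v ∈ treeVerts x E n ↔ v = x ∨ ∃ k, k < n ∧ v ∈ E k := by
  simp [treeVerts]

private lemma x_mem_treeVerts (x : V) (E : ℕ → Sym2 V) (n : ℕ) : x ∈ treeVerts x E n :=
  mem_treeVerts_iff.mpr (Or.inl rfl)

private lemma treeVerts_mono {x : V} {E : ℕ → Sym2 V} {n n' : ℕ} (h : n ≤ n') :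
    treeVerts x E n ⊆ treeVerts x E n' := by
  intro v hv
  rcases mem_treeVerts_iff.mp hv with h1 | ⟨k, hk, hkE⟩
  · exact mem_treeVerts_iff.mpr (Or.inl h1)
  · exact mem_treeVerts_iff.mpr (Or.inr ⟨k, lt_of_lt_of_le hk h, hkE⟩)

private lemma mem_treeVerts_succ {x : V} {E : ℕ → Sym2 V} {v : V} {n : ℕ} :
    v ∈ treeVerts x E (n + 1) ↔ v ∈ treeVerts x E n ∨ v ∈ E n := by
  rw [mem_treeVerts_iff, mem_treeVerts_iff]
  constructor
  · rintro (h | ⟨k, hk, hkE⟩)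
    · exact Or.inl (Or.inl h)
    · rcases Nat.lt_succ_iff_lt_or_eq.mp hk with hk' | rfl
      · exact Or.inl (Or.inr ⟨k, hk', hkE⟩)
      · exact Or.inr hkE
  · rintro ((h | ⟨k, hk, hkE⟩) | h)
    · exact Or.inl h
    · exact Or.inr ⟨k, hk.trans (Nat.lt_succ_self n), hkE⟩
    · exact Or.inr ⟨n, Nat.lt_succ_self n, h⟩

private lemma treeVerts_zero {x : V} {E : ℕ → Sym2 V} {v : V} :
    v ∈ treeVerts x E 0 ↔ v = x := by
  rw [mem_treeVerts_iff]
  simp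

/-- The basic "cheap-edge" relation on the induced subgraph. -/
private def rrel (G : SimpleGraph V) (S : Set V) (τ : Sym2 V → ℝ) (b : ℝ) (p q : V) : Prop :=
  ((⊤ : G.Subgraph).induce S).Adj p q ∧ τ s(p, q) ≤ b

private lemma rrel_iff {G : SimpleGraph V} {S : Set V} {τ : Sym2 V → ℝ} {b : ℝ} {p q : V} :
    rrel G S τ b p q ↔ (p ∈ S ∧ q ∈ S ∧ G.Adj p q) ∧ τ s(p, q) ≤ b := by
  unfold rrel
  rw [SimpleGraph.Subgraph.induce_adj]
  simp [SimpleGraph.Subgraph.top_adj]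

private lemma rrel_symm {G : SimpleGraph V} {S : Set V} {τ : Sym2 V → ℝ} {b : ℝ} :
    Symmetric (rrel G S τ b) := by
  intro p q h
  rw [rrel_iff] at h ⊢
  obtain ⟨⟨h1, h2, h3⟩, h4⟩ := h
  rw [Sym2.eq_swap] at h4
  exact ⟨⟨h2, h1, h3.symm⟩, h4⟩

private lemma rrel_mono {G : SimpleGraph V} {S : Set V} {τ : Sym2 V → ℝ} {b b' : ℝ}
    (h : b ≤ b') {v w : V} (hr : Relation.ReflTransGen (rrel G S τ b) v w) :
    Relation.ReflTransGen (rrel G S τ b') v w :=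
  Relation.ReflTransGen.mono (fun _ _ hpq => ⟨hpq.1, hpq.2.trans h⟩) _ _ hr

private def reachSet (G : SimpleGraph V) (S : Set V) (τ : Sym2 V → ℝ) (R : V) (v : V) :
    Set ℝ :=
  {b | 0 ≤ b ∧ Relation.ReflTransGen (rrel G S τ b) v R}

private noncomputable def rho (G : SimpleGraph V) (S : Set V) (τ : Sym2 V → ℝ) (R : V)
    (v : V) : ℝ :=
  sInf (reachSet G S τ R v)

private lemma reachSet_bddBelow {G : SimpleGraph V} {S : Set V} {τ : Sym2 V → ℝ} {R v : V} :
    BddBelow (reachSet G S τ R v) :=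
  ⟨0, fun _ hb => hb.1⟩

private lemma rho_le {G : SimpleGraph V} {S : Set V} {τ : Sym2 V → ℝ} {R v : V} {b : ℝ}
    (hb : b ∈ reachSet G S τ R v) : rho G S τ R v ≤ b :=
  csInf_le reachSet_bddBelow hb

private lemma rho_nonneg {G : SimpleGraph V} {S : Set V} {τ : Sym2 V → ℝ} {R v : V}
    (hne : (reachSet G S τ R v).Nonempty) : 0 ≤ rho G S τ R v :=
  le_csInf hne (fun _ hb => hb.1)

private lemma rho_R {G : SimpleGraph V} {S : Set V} {τ : Sym2 V → ℝ} {R : V} :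
    rho G S τ R R = 0 := by
  have h0 : (0 : ℝ) ∈ reachSet G S τ R R := ⟨le_refl _, Relation.ReflTransGen.refl⟩
  exact le_antisymm (rho_le h0) (rho_nonneg ⟨0, h0⟩)

private lemma reach_reduce [Finite V] {G : SimpleGraph V} {S : Set V} {τ : Sym2 V → ℝ}
    {R : V} {b : ℝ} :
    ∀ w : V, Relation.ReflTransGen (rrel G S τ b) w R →
      ∃ b', (0 ≤ b' ∧ Relation.ReflTransGen (rrel G S τ b') w R) ∧ b' ≤ max b 0 ∧
        (b' = 0 ∨ ∃ e, b' = τ e) := by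
  intro w hw
  induction hw using Relation.ReflTransGen.head_induction_on with
  | refl => exact ⟨0, ⟨le_refl _, Relation.ReflTransGen.refl⟩, le_max_right _ _, Or.inl rfl⟩
  | @head a a' hpq hq ih =>
    obtain ⟨b', ⟨hb'0, hb'path⟩, hb'le, hb'form⟩ := ih
    rcases le_total (τ s(a, a')) b' with hle | hle
    · exact ⟨b', ⟨hb'0, Relation.ReflTransGen.head ⟨hpq.1, hle⟩ hb'path⟩, hb'le, hb'form⟩
    · refine ⟨τ s(a, a'), ⟨hb'0.trans hle, Relation.ReflTransGen.head ⟨hpq.1, le_refl _⟩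
        (rrel_mono hle hb'path)⟩, le_trans hpq.2 (le_max_left _ _), Or.inr ⟨_, rfl⟩⟩

private lemma rho_mem [Finite V] {G : SimpleGraph V} {S : Set V} {τ : Sym2 V → ℝ} {R v : V}
    (hne : (reachSet G S τ R v).Nonempty) : rho G S τ R v ∈ reachSet G S τ R v := by
  classical
  set D : Set ℝ := {b' | b' ∈ reachSet G S τ R v ∧ (b' = 0 ∨ ∃ e, b' = τ e)} with hD
  have hDfin : D.Finite := by
    apply Set.Finite.subset ((Set.finite_range τ).insert 0)
    rintro b ⟨-, rfl | ⟨e, rfl⟩⟩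
    · exact Set.mem_insert _ _
    · exact Set.mem_insert_of_mem _ ⟨e, rfl⟩
  have hDne : D.Nonempty := by
    obtain ⟨b, hb⟩ := hne
    obtain ⟨b', hb'mem, _, hform⟩ := reach_reduce v hb.2
    exact ⟨b', hb'mem, hform⟩
  obtain ⟨b₀, hb₀D, hb₀min⟩ := Set.exists_min_image D id hDfin hDne
  have heq : rho G S τ R v = b₀ := by
    refine le_antisymm (rho_le hb₀D.1) (le_csInf hne ?_)
    intro b hb
    obtain ⟨b', hb'mem, hb'le, hform⟩ := reach_reduce v hb.2
    have : b₀ ≤ b' := hb₀min b' ⟨hb'mem, hform⟩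
    refine this.trans (hb'le.trans ?_)
    rw [max_eq_left hb.1]
  rw [heq]
  exact hb₀D.1


private theorem static_exists [Fintype V] (G : SimpleGraph V)
    (c : V → Color) (hnw : ∀ v, c v ≠ Color.white)
    (τ : Sym2 V → ℝ) (hτpos : ∀ e ∈ G.edgeSet, 0 < τ e)
    (x : V) (hx : c x = Color.green)
    (E : ℕ → Sym2 V) (m : ℕ) (R : V) (hinv : StoppedInvasion G c τ x E m R) :
    ∃ ρ : V → ℝ,
      (∀ v ∈ treeVerts x E m, 0 ≤ ρ v) ∧
      R ∈ treeVerts x E m ∧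
      (∀ v ∈ treeVerts x E m, v ≠ R → c v = Color.green) ∧
      ρ R = 0 ∧
      (∀ p q : V, p ∈ treeVerts x E m → q ∈ treeVerts x E m → G.Adj p q →
        ρ p ≤ max (τ s(p, q)) (ρ q)) ∧
      (∀ u ∈ treeVerts x E m, u ≠ R → ∀ w, w ∉ treeVerts x E m → G.Adj u w →
        ρ u ≤ τ s(u, w)) ∧
      (∀ v ∈ treeVerts x E m, ∀ t : ℝ, ρ v ≤ t →
        Relation.ReflTransGen
          (fun p q => (p ∈ treeVerts x E m ∧ q ∈ treeVerts x E m ∧ G.Adj p q) ∧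
            τ s(p, q) ≤ t ∧ τ s(p, q) ≤ max (ρ p) (ρ q)) v R) := by
  classical
  obtain ⟨hm, hstep, hext, hRE, hRT, hcR⟩ := hinv
  have hsplit : ∀ n : ℕ, ∃ a u : V, n < m →
      E n = s(a, u) ∧ a ∈ treeVerts x E n ∧ u ∉ treeVerts x E n := by
    intro n
    by_cases hn : n < m
    · obtain ⟨hEg, huniq, -⟩ := hstep n hn
      obtain ⟨a, b, hab⟩ := sym2_cases (E n)
      have hadj : G.Adj a b := by rw [hab, SimpleGraph.mem_edgeSet] at hEg; exact hEg
      obtain ⟨v0, ⟨hv0e, hv0T⟩, huq⟩ := huniq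
      rw [hab, Sym2.mem_iff] at hv0e
      rcases hv0e with rfl | rfl
      · refine ⟨v0, b, fun _ => ⟨hab, hv0T, fun hbT => ?_⟩⟩
        exact hadj.ne (huq b ⟨by rw [hab]; exact Sym2.mem_mk_right v0 b, hbT⟩).symm
      · refine ⟨v0, a, fun _ => ⟨hab.trans Sym2.eq_swap, hv0T, fun haT => ?_⟩⟩
        exact hadj.ne (huq a ⟨by rw [hab]; exact Sym2.mem_mk_left a v0, haT⟩)
    · exact ⟨x, x, fun h => absurd h hn⟩
  choose av uv hsp using hsplit
  have hEeq : ∀ n, n < m → E n = s(av n, uv n) := fun n hn => (hsp n hn).1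
  have havT : ∀ n, n < m → av n ∈ treeVerts x E n := fun n hn => (hsp n hn).2.1
  have huvT : ∀ n, n < m → uv n ∉ treeVerts x E n := fun n hn => (hsp n hn).2.2
  have hEadj : ∀ n, n < m → G.Adj (av n) (uv n) := by
    intro n hn
    have h := (hstep n hn).1
    rwa [hEeq n hn, SimpleGraph.mem_edgeSet] at h
  have hmemE : ∀ n, n < m → ∀ v : V, v ∈ E n ↔ v = av n ∨ v = uv n := by
    intro n hn v; rw [hEeq n hn, Sym2.mem_iff]
  have hm1 : m - 1 < m := Nat.sub_lt hm one_pos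
  have huvR : uv (m - 1) = R := by
    rcases (hmemE (m-1) hm1 R).mp hRE with h | h
    · rw [h] at hRT; exact absurd (havT _ hm1) hRT
    · exact h.symm
  have hminext : ∀ n, n < m → ∀ p q : V, G.Adj p q → p ∈ treeVerts x E n →
      q ∉ treeVerts x E n → τ (E n) ≤ τ s(p, q) := by
    intro n hn p q hpq hpT hqT
    refine (hstep n hn).2.2 s(p, q) ((SimpleGraph.mem_edgeSet G).mpr hpq) ⟨p, ⟨?_, hpT⟩, ?_⟩
    · exact Sym2.mem_mk_left p q
    · rintro y ⟨hy, hyT⟩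
      rcases Sym2.mem_iff.mp hy with rfl | rfl
      · rfl
      · exact absurd hyT hqT
  have hentry : ∀ n, n ≤ m → ∀ v ∈ treeVerts x E n, v = x ∨ ∃ l, l < n ∧ v = uv l := by
    intro n
    induction n with
    | zero => intro _ v hv; exact Or.inl (treeVerts_zero.mp hv)
    | succ n ih =>
      intro hnm v hv
      have hnm' : n ≤ m := Nat.le_of_succ_le hnm
      have hnmlt : n < m := Nat.lt_of_succ_le hnm
      rcases mem_treeVerts_succ.mp hv with hv | hv
      · rcases ih hnm' v hv with h | ⟨l, hl, hluv⟩
        · exact Or.inl h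
        · exact Or.inr ⟨l, hl.trans (Nat.lt_succ_self n), hluv⟩
      · rcases (hmemE n hnmlt v).mp hv with rfl | rfl
        · rcases ih hnm' _ (havT n hnmlt) with h | ⟨l, hl, hluv⟩
          · exact Or.inl h
          · exact Or.inr ⟨l, hl.trans (Nat.lt_succ_self n), hluv⟩
        · exact Or.inr ⟨n, Nat.lt_succ_self n, rfl⟩
  have havS : ∀ n, n < m → av n ∈ treeVerts x E m :=
    fun n hn => treeVerts_mono (le_of_lt hn) (havT n hn)
  have huvT1 : ∀ n, n < m → uv n ∈ treeVerts x E (n+1) :=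
    fun n hn => mem_treeVerts_succ.mpr (Or.inr ((hmemE n hn (uv n)).mpr (Or.inr rfl)))
  have huvS : ∀ n, n < m → uv n ∈ treeVerts x E m :=
    fun n hn => treeVerts_mono (Nat.succ_le_of_lt hn) (huvT1 n hn)
  have hRS : R ∈ treeVerts x E m := huvR ▸ huvS (m-1) hm1
  have hτE : ∀ n, n < m → τ s(av n, uv n) = τ (E n) := fun n hn => by rw [← hEeq n hn]
  have hrrelE2 : ∀ (b : ℝ), ∀ n, n < m → τ (E n) ≤ b →
      rrel G (treeVerts x E m) τ b (av n) (uv n) := by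
    intro b n hn hb
    refine rrel_iff.mpr ⟨⟨havS n hn, huvS n hn, hEadj n hn⟩, ?_⟩
    rw [hτE n hn]; exact hb
  have hrrelE : ∀ (b : ℝ), ∀ n, n < m → τ (E n) ≤ b →
      rrel G (treeVerts x E m) τ b (uv n) (av n) := by
    intro b n hn hb
    exact rrel_symm (hrrelE2 b n hn hb)
  have hbb : ∃ bb : ℝ, ∀ l, l < m → τ (E l) ≤ bb := by
    set F : Finset ℝ := (Finset.range m).image (fun l => τ (E l)) with hF
    have hFne : F.Nonempty := ⟨τ (E 0), by
      rw [hF]; exact Finset.mem_image.mpr ⟨0, Finset.mem_range.mpr hm, rfl⟩⟩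
    refine ⟨F.max' hFne, fun l hl => Finset.le_max' F _ ?_⟩
    rw [hF]; exact Finset.mem_image.mpr ⟨l, Finset.mem_range.mpr hl, rfl⟩
  obtain ⟨bb, hbble⟩ := hbb
  have hconnx : ∀ n, n ≤ m → ∀ v ∈ treeVerts x E n,
      Relation.ReflTransGen (rrel G (treeVerts x E m) τ bb) v x := by
    intro n
    induction n with
    | zero =>
      intro _ v hv
      rw [treeVerts_zero.mp hv]
    | succ n ih =>
      intro hnm v hv
      have hnmlt : n < m := Nat.lt_of_succ_le hnm
      rcases mem_treeVerts_succ.mp hv with hv | hv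
      · exact ih (Nat.le_of_succ_le hnm) v hv
      · rcases (hmemE n hnmlt v).mp hv with rfl | rfl
        · exact ih (Nat.le_of_succ_le hnm) _ (havT n hnmlt)
        · exact Relation.ReflTransGen.head (hrrelE bb n hnmlt (hbble n hnmlt))
            (ih (Nat.le_of_succ_le hnm) _ (havT n hnmlt))
  have hreach_ne : ∀ v ∈ treeVerts x E m, (reachSet G (treeVerts x E m) τ R v).Nonempty := by
    intro v hv
    refine ⟨max bb 0, le_max_right _ _, ?_⟩
    have h1 := hconnx m (le_refl m) v hv
    have h2 := hconnx m (le_refl m) R hRS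
    have h3 : Relation.ReflTransGen (rrel G (treeVerts x E m) τ bb) x R :=
      @Std.Symm.symm _ _ (@Relation.ReflTransGen.stdSymm _ _ ⟨fun _ _ h => rrel_symm h⟩) _ _ h2
    exact rrel_mono (le_max_left _ _) (h1.trans h3)
  -- ============ key3 ============
  have key3 : ∀ b : ℝ, ∀ j, j < m → (∀ l, j < l → l < m → τ (E l) ≤ b) →
      Relation.ReflTransGen (rrel G (treeVerts x E m) τ b) (uv j) R := by
    intro b
    have main : ∀ k j, j < m → m - 1 - j ≤ k → (∀ l, j < l → l < m → τ (E l) ≤ b) →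
        Relation.ReflTransGen (rrel G (treeVerts x E m) τ b) (uv j) R := by
      intro k
      induction k with
      | zero =>
        intro j hj hk _
        have hje : j = m - 1 := by omega
        rw [hje, huvR]
      | succ k ih =>
        intro j hj hk hb
        by_cases hjm : j = m - 1
        · rw [hjm, huvR]
        · have hj1 : j + 1 < m := by omega
          have hIH : Relation.ReflTransGen (rrel G (treeVerts x E m) τ b) (uv (j+1)) R :=
            ih (j+1) hj1 (by omega) (fun l hl hlm => hb l (by omega) hlm)
          set A : V → Prop :=
            fun v => Relation.ReflTransGen (rrel G (treeVerts x E m) τ b) v (uv (j+1)) with hA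
          have hAclosed : ∀ p q : V, rrel G (treeVerts x E m) τ b p q → A q → A p :=
            fun p q hpq hq => Relation.ReflTransGen.head hpq hq
          have hcross : ∀ (X : Set V) (z v : V), z ∈ X →
              Relation.ReflTransGen (rrel G (treeVerts x E m) τ b) v z → v ∉ X →
              ∃ p q : V, rrel G (treeVerts x E m) τ b p q ∧ p ∉ X ∧ q ∈ X := by
            intro X z v hz hpath
            induction hpath using Relation.ReflTransGen.head_induction_on with
            | refl => intro hv; exact absurd hz hv
            | @head p q hpq hqz ihh =>
              intro hpX
              by_cases hqX : q ∈ X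
              · exact ⟨p, q, hpq, hpX, hqX⟩
              · exact ihh hqX
          have hdesc : ∀ k', k' ≤ m → ∀ lo : ℕ, (∀ i, lo < i → i < k' → τ (E i) ≤ b) →
              ∀ z : V, z ∈ treeVerts x E k' → ¬ A z →
              Relation.ReflTransGen (rrel G (treeVerts x E m) τ b) (uv j) z →
              ∃ z', z' ∈ treeVerts x E (lo + 1) ∧ ¬ A z' ∧
                Relation.ReflTransGen (rrel G (treeVerts x E m) τ b) (uv j) z' := by
            intro k'
            induction k' using Nat.strong_induction_on with
            | _ k' ihk =>
              intro hk'm lo hcheap z hz hzA hzconn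
              rcases hentry k' hk'm z hz with hzx | ⟨l, hl, rfl⟩
              · exact ⟨z, by rw [hzx]; exact x_mem_treeVerts _ _ _, hzA, hzconn⟩
              · by_cases hllo : l ≤ lo
                · exact ⟨uv l, treeVerts_mono (Nat.succ_le_succ hllo)
                    (huvT1 l (lt_of_lt_of_le hl hk'm)), hzA, hzconn⟩
                · push_neg at hllo
                  have hlm : l < m := lt_of_lt_of_le hl hk'm
                  have hcheapl : τ (E l) ≤ b := hcheap l hllo hl
                  have hedge : rrel G (treeVerts x E m) τ b (uv l) (av l) :=
                    hrrelE b l hlm hcheapl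
                  have hanA : ¬ A (av l) := fun h => hzA (hAclosed _ _ hedge h)
                  exact ihk l hl (le_of_lt hlm) lo
                    (fun i hi hi' => hcheap i hi (hi'.trans hl))
                    (av l) (havT l hlm) hanA (hzconn.tail hedge)
          have hinner : ∀ e, e ≤ j → A (uv e) →
              (∀ i, e < i → i < m → τ (E i) ≤ b) →
              (∃ z, z ∈ treeVerts x E e ∧ ¬ A z ∧
                Relation.ReflTransGen (rrel G (treeVerts x E m) τ b) (uv j) z) → False := by
            intro e
            induction e using Nat.strong_induction_on with
            | _ e ihe =>
              intro hej hAe hcheap hex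
              obtain ⟨z, hzT, hzA, hzconn⟩ := hex
              have hem : e < m := lt_of_le_of_lt hej hj
              have hujT : uv j ∉ treeVerts x E e := fun h => huvT j hj (treeVerts_mono hej h)
              obtain ⟨p, q, hpq, hpX, hqX⟩ := hcross (treeVerts x E e) z (uv j) hzT hzconn hujT
              have hGpq : G.Adj p q := (rrel_iff.mp hpq).1.2.2
              have hcheapE : τ (E e) ≤ b := by
                have h1 : τ (E e) ≤ τ s(q, p) := hminext e hem q p hGpq.symm hqX hpX
                rw [Sym2.eq_swap] at h1
                exact h1.trans (rrel_iff.mp hpq).2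
              have hAav : A (av e) := hAclosed _ _ (hrrelE2 b e hem hcheapE) hAe
              rcases hentry e (le_of_lt hem) (av e) (havT e hem) with hax | ⟨e', he', hae'⟩
              · have hAx : A x := by rw [← hax]; exact hAav
                have hcheaplow : ∀ i, i < e → τ (E i) ≤ b := by
                  intro i hi
                  have h1 : τ (E i) ≤ τ s(x, uv e) := by
                    refine hminext i (hi.trans hem) x (uv e) ?_ (x_mem_treeVerts x E i) ?_
                    · rw [← hax]; exact hEadj e hem
                    · intro hcon; exact huvT e hem (treeVerts_mono (le_of_lt hi) hcon)
                  rw [← hax, hτE e hem] at h1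
                  exact h1.trans hcheapE
                obtain ⟨z', hz'T, hz'A, hz'conn⟩ := hdesc e (le_of_lt hem) 0
                  (fun i _ hie => hcheaplow i hie) z hzT hzA hzconn
                rcases mem_treeVerts_succ.mp hz'T with hz'0 | hz'E
                · rw [treeVerts_zero.mp hz'0] at hz'A; exact hz'A hAx
                · rcases (hmemE 0 hm z').mp hz'E with rfl | rfl
                  · rw [treeVerts_zero.mp (havT 0 hm)] at hz'A; exact hz'A hAx
                  · have hch0 : τ (E 0) ≤ b := by
                      rcases Nat.eq_zero_or_pos e with rfl | hpos
                      · exact hcheapE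
                      · exact hcheaplow 0 hpos
                    have hAav0 : A (av 0) := by rw [treeVerts_zero.mp (havT 0 hm)]; exact hAx
                    exact hz'A (hAclosed _ _ (hrrelE b 0 hm hch0) hAav0)
              · have he'm : e' < m := he'.trans hem
                have hAe' : A (uv e') := by rw [← hae']; exact hAav
                have hcheapmid : ∀ i, e' < i → i < e → τ (E i) ≤ b := by
                  intro i hi1 hi2
                  have h1 : τ (E i) ≤ τ s(uv e', uv e) := by
                    refine hminext i (hi2.trans hem) (uv e') (uv e) ?_ ?_ ?_
                    · rw [← hae']; exact hEadj e hem
                    · exact treeVerts_mono (Nat.succ_le_of_lt hi1) (huvT1 e' he'm)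
                    · intro hcon; exact huvT e hem (treeVerts_mono (le_of_lt hi2) hcon)
                  rw [← hae', hτE e hem] at h1
                  exact h1.trans hcheapE
                have hcheapall : ∀ i, e' < i → i < m → τ (E i) ≤ b := by
                  intro i hi1 him
                  rcases lt_trichotomy i e with h | rfl | h
                  · exact hcheapmid i hi1 h
                  · exact hcheapE
                  · exact hcheap i h him
                obtain ⟨z', hz'T, hz'A, hz'conn⟩ := hdesc e (le_of_lt hem) e'
                  (fun i hi1 hi2 => hcheapmid i hi1 hi2) z hzT hzA hzconn
                have he'j : e' ≤ j := le_of_lt (lt_of_lt_of_le he' hej)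
                rcases mem_treeVerts_succ.mp hz'T with hz'T' | hz'E
                · exact ihe e' he' he'j hAe' hcheapall ⟨z', hz'T', hz'A, hz'conn⟩
                · rcases (hmemE e' he'm z').mp hz'E with rfl | rfl
                  · exact ihe e' he' he'j hAe' hcheapall ⟨av e', havT e' he'm, hz'A, hz'conn⟩
                  · exact hz'A hAe'
          by_cases hAuj : A (uv j)
          · exact hAuj.trans hIH
          · exfalso
            have hcheapj1 : τ (E (j+1)) ≤ b := hb (j+1) (Nat.lt_succ_self j) hj1
            have hAav1 : A (av (j+1)) :=
              Relation.ReflTransGen.single (hrrelE2 b (j+1) hj1 hcheapj1)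
            have hin : av (j+1) ∈ treeVerts x E j ∨ av (j+1) = uv j := by
              rcases mem_treeVerts_succ.mp (havT (j+1) hj1) with hT | hE
              · exact Or.inl hT
              · rcases (hmemE j hj _).mp hE with h | h
                · exact Or.inl (by rw [h]; exact havT j hj)
                · exact Or.inr h
            rcases hin with hT | huj
            · rcases hentry j (le_of_lt hj) _ hT with hax | ⟨e₁, he₁, hae₁⟩
              · have hAx : A x := by rw [← hax]; exact hAav1
                have hcheaplow : ∀ i, i ≤ j → τ (E i) ≤ b := by
                  intro i hij
                  have h1 : τ (E i) ≤ τ s(x, uv (j+1)) := by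
                    refine hminext i (lt_of_le_of_lt hij hj) x (uv (j+1)) ?_
                      (x_mem_treeVerts x E i) ?_
                    · rw [← hax]; exact hEadj (j+1) hj1
                    · intro hcon
                      exact huvT (j+1) hj1 (treeVerts_mono (by omega) hcon)
                  rw [← hax, hτE (j+1) hj1] at h1
                  exact h1.trans hcheapj1
                obtain ⟨z', hz'T, hz'A, hz'conn⟩ := hdesc (j+1) (by omega) 0
                  (fun i _ hij1 => hcheaplow i (by omega)) (uv j)
                  (huvT1 j hj) hAuj Relation.ReflTransGen.refl
                rcases mem_treeVerts_succ.mp hz'T with hz'0 | hz'E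
                · rw [treeVerts_zero.mp hz'0] at hz'A; exact hz'A hAx
                · rcases (hmemE 0 hm z').mp hz'E with rfl | rfl
                  · rw [treeVerts_zero.mp (havT 0 hm)] at hz'A; exact hz'A hAx
                  · have hAav0 : A (av 0) := by rw [treeVerts_zero.mp (havT 0 hm)]; exact hAx
                    exact hz'A (hAclosed _ _ (hrrelE b 0 hm (hcheaplow 0 (Nat.zero_le j))) hAav0)
              · have he₁m : e₁ < m := he₁.trans hj
                have hAe₁ : A (uv e₁) := by rw [← hae₁]; exact hAav1
                have hcheapall : ∀ i, e₁ < i → i < m → τ (E i) ≤ b := by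
                  intro i hi1 him
                  rcases Nat.lt_or_ge i (j+1) with hij | hij
                  · have h1 : τ (E i) ≤ τ s(uv e₁, uv (j+1)) := by
                      refine hminext i him (uv e₁) (uv (j+1)) ?_ ?_ ?_
                      · rw [← hae₁]; exact hEadj (j+1) hj1
                      · exact treeVerts_mono (Nat.succ_le_of_lt hi1) (huvT1 e₁ he₁m)
                      · intro hcon; exact huvT (j+1) hj1 (treeVerts_mono (by omega) hcon)
                    rw [← hae₁, hτE (j+1) hj1] at h1
                    exact h1.trans hcheapj1
                  · exact hb i (by omega) him
                obtain ⟨z', hz'T, hz'A, hz'conn⟩ := hdesc (j+1) (by omega) e₁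
                  (fun i hi1 hi2 => hcheapall i hi1 (by omega)) (uv j)
                  (huvT1 j hj) hAuj Relation.ReflTransGen.refl
                rcases mem_treeVerts_succ.mp hz'T with hz'T' | hz'E
                · exact hinner e₁ he₁.le hAe₁ hcheapall ⟨z', hz'T', hz'A, hz'conn⟩
                · rcases (hmemE e₁ he₁m z').mp hz'E with rfl | rfl
                  · exact hinner e₁ he₁.le hAe₁ hcheapall ⟨av e₁, havT e₁ he₁m, hz'A, hz'conn⟩
                  · exact hz'A hAe₁
            · exact hAuj (by rw [← huj]; exact hAav1)
    intro j hj hb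
    exact main (m - 1 - j) j hj (le_refl _) hb
  -- ============ conclusion ============
  refine ⟨rho G (treeVerts x E m) τ R, ?_, hRS, ?_, rho_R, ?_, ?_, ?_⟩
  · exact fun v hv => rho_nonneg (hreach_ne v hv)
  · intro v hv hvR
    rcases hentry m (le_refl m) v hv with hvx | ⟨l, hl, rfl⟩
    · rw [hvx]; exact hx
    · have hlm1 : l ≠ m - 1 := fun h => hvR (by rw [h, huvR])
      have hred := hext l hl (uv l) ((hmemE l hl _).mpr (Or.inr rfl)) (huvT l hl)
      cases hc : c (uv l) with
      | white => exact absurd hc (hnw _)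
      | red => exact absurd (hred.mp hc) hlm1
      | green => rfl
  · -- adjacent bound
    intro p q hp hq hadjpq
    refine rho_le ⟨le_max_of_le_right (rho_nonneg (hreach_ne q hq)), ?_⟩
    refine Relation.ReflTransGen.head (rrel_iff.mpr ⟨⟨hp, hq, hadjpq⟩, le_max_left _ _⟩) ?_
    exact rrel_mono (le_max_right _ _) (rho_mem (hreach_ne q hq)).2
  · -- KEY
    intro u hu huR w hw hadjuw
    have hb0 : 0 < τ s(u, w) := hτpos _ ((SimpleGraph.mem_edgeSet G).mpr hadjuw)
    rcases hentry m (le_refl m) u hu with hux | ⟨l, hl, rfl⟩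
    · rw [hux] at hu hadjuw hb0 ⊢
      have hcheap : ∀ l, l < m → τ (E l) ≤ τ s(x, w) := by
        intro l hl
        exact hminext l hl x w hadjuw (x_mem_treeVerts x E l)
          (fun hc => hw (treeVerts_mono hl.le hc))
      have hav0 : av 0 = x := treeVerts_zero.mp (havT 0 hm)
      refine rho_le ⟨hb0.le, ?_⟩
      refine Relation.ReflTransGen.head ?_ (key3 _ 0 hm (fun l _ hlm => hcheap l hlm))
      refine rrel_iff.mpr ⟨⟨hu, huvS 0 hm, ?_⟩, ?_⟩
      · rw [← hav0]; exact hEadj 0 hm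
      · have he0 : τ s(x, uv 0) = τ (E 0) := by rw [hEeq 0 hm, hav0]
        rw [he0]; exact hcheap 0 hm
    · have hcheap : ∀ i, l < i → i < m → τ (E i) ≤ τ s(uv l, w) := by
        intro i hi him
        exact hminext i him (uv l) w hadjuw
          (treeVerts_mono (Nat.succ_le_of_lt hi) (huvT1 l hl))
          (fun hc => hw (treeVerts_mono him.le hc))
      exact rho_le ⟨hb0.le, key3 _ l hl hcheap⟩
  · -- L1
    have mainL1 : ∀ n : ℕ, ∀ v, v ∈ treeVerts x E m →
        ({u | u ∈ treeVerts x E m ∧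
            rho G (treeVerts x E m) τ R u < rho G (treeVerts x E m) τ R v}.ncard ≤ n) →
        ∀ t : ℝ, rho G (treeVerts x E m) τ R v ≤ t →
        Relation.ReflTransGen
          (fun p q => (p ∈ treeVerts x E m ∧ q ∈ treeVerts x E m ∧ G.Adj p q) ∧
            τ s(p, q) ≤ t ∧ τ s(p, q) ≤ max (rho G (treeVerts x E m) τ R p)
              (rho G (treeVerts x E m) τ R q)) v R := by
      intro n
      induction n using Nat.strong_induction_on with
      | _ n ihn =>
        intro v hv hcard t hvt
        have hpath := (rho_mem (hreach_ne v hv)).2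
        have hinner : ∀ q : V,
            Relation.ReflTransGen (rrel G (treeVerts x E m) τ
              (rho G (treeVerts x E m) τ R v)) q R →
            rho G (treeVerts x E m) τ R q = rho G (treeVerts x E m) τ R v →
            q ∈ treeVerts x E m →
            Relation.ReflTransGen
              (fun p q' => (p ∈ treeVerts x E m ∧ q' ∈ treeVerts x E m ∧ G.Adj p q') ∧
                τ s(p, q') ≤ t ∧ τ s(p, q') ≤ max (rho G (treeVerts x E m) τ R p)
                  (rho G (treeVerts x E m) τ R q')) q R := by
          intro q hq
          induction hq using Relation.ReflTransGen.head_induction_on with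
          | refl => intro _ _; exact Relation.ReflTransGen.refl
          | @head p q' hpq hq' ihq =>
            intro hpeq hpS
            have h1 := rrel_iff.mp hpq
            have hq'S : q' ∈ treeVerts x E m := h1.1.2.1
            have hq'le : rho G (treeVerts x E m) τ R q' ≤ rho G (treeVerts x E m) τ R v :=
              rho_le ⟨rho_nonneg (hreach_ne v hv), hq'⟩
            have hτp : τ s(p, q') ≤ rho G (treeVerts x E m) τ R p := by
              rw [hpeq]; exact h1.2
            have hQedge : (p ∈ treeVerts x E m ∧ q' ∈ treeVerts x E m ∧ G.Adj p q') ∧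
                τ s(p, q') ≤ t ∧ τ s(p, q') ≤ max (rho G (treeVerts x E m) τ R p)
                  (rho G (treeVerts x E m) τ R q') :=
              ⟨h1.1, (h1.2.trans hvt), le_max_of_le_left hτp⟩
            rcases eq_or_lt_of_le hq'le with heq | hlt
            · exact Relation.ReflTransGen.head hQedge (ihq heq hq'S)
            · have hsub : {u | u ∈ treeVerts x E m ∧
                  rho G (treeVerts x E m) τ R u < rho G (treeVerts x E m) τ R q'} ⊂
                  {u | u ∈ treeVerts x E m ∧
                  rho G (treeVerts x E m) τ R u < rho G (treeVerts x E m) τ R v} := by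
                constructor
                · intro u hu; exact ⟨hu.1, hu.2.trans hlt⟩
                · intro hcon
                  have hq'mem : q' ∈ {u | u ∈ treeVerts x E m ∧
                      rho G (treeVerts x E m) τ R u < rho G (treeVerts x E m) τ R v} :=
                    ⟨hq'S, hlt⟩
                  exact lt_irrefl _ (hcon hq'mem).2
              have hlt2 := Set.ncard_lt_ncard hsub (Set.toFinite _)
              exact Relation.ReflTransGen.head hQedge
                (ihn _ (lt_of_lt_of_le hlt2 hcard) q' hq'S (le_refl _) t (hlt.le.trans hvt))
        exact hinner v hpath rfl hv
    intro v hv t hvt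
    exact mainL1 _ v hv (le_refl _) t hvt



private theorem dyn_agree [Fintype V] (G : SimpleGraph V)
    (c : V → Color) (τ : Sym2 V → ℝ) (hτpos : ∀ e ∈ G.edgeSet, 0 < τ e)
    (S : Set V) (R : V) (hRS : R ∈ S) (hcR : c R = Color.red)
    (hgreen : ∀ v ∈ S, v ≠ R → c v = Color.green)
    (hnwS : ∀ v ∈ S, c v ≠ Color.white)
    (ρ : V → ℝ)
    (hρ0 : ∀ v ∈ S, 0 ≤ ρ v)
    (hρR : ρ R = 0)
    (hρadj : ∀ p q : V, p ∈ S → q ∈ S → G.Adj p q → ρ p ≤ max (τ s(p, q)) (ρ q))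
    (hkey : ∀ u ∈ S, u ≠ R → ∀ w, w ∉ S → G.Adj u w → ρ u ≤ τ s(u, w))
    (hL1 : ∀ v ∈ S, ∀ t : ℝ, ρ v ≤ t →
      Relation.ReflTransGen (fun p q => (p ∈ S ∧ q ∈ S ∧ G.Adj p q) ∧
        τ s(p, q) ≤ t ∧ τ s(p, q) ≤ max (ρ p) (ρ q)) v R)
    (G₀ : G.Subgraph) (hle : (⊤ : G.Subgraph).induce S ≤ G₀)
    (c' : V → Color) (τ' : Sym2 V → ℝ)
    (hc' : ∀ v ∈ S, c' v = c v)
    (hτ' : ∀ e ∈ ((⊤ : G.Subgraph).induce S).edgeSet ∪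
        {e | e ∈ G.edgeSet ∧ ∃ u v : V, e = s(u, v) ∧ u ∈ S ∧ u ≠ R ∧ v ∉ S}, τ' e = τ e)
    (ev : Evolution G₀ c' τ') :
    ∀ t : ℝ, 0 ≤ t →
      (∀ v ∈ S, ev.col t v = (if ρ v ≤ t then Color.red else Color.green)) ∧
      (∀ e ∈ ((⊤ : G.Subgraph).induce S).edgeSet,
        (ev.opn t e ↔ (τ e ≤ t ∧ τ e ≤ Mfun ρ e))) := by
  classical
  have hHadj : ∀ p q : V, ((⊤ : G.Subgraph).induce S).Adj p q ↔ (p ∈ S ∧ q ∈ S ∧ G.Adj p q) := by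
    intro p q
    rw [SimpleGraph.Subgraph.induce_adj]
    simp [SimpleGraph.Subgraph.top_adj]
  have hHverts : ((⊤ : G.Subgraph).induce S).verts = S :=
    SimpleGraph.Subgraph.induce_verts _ _
  have hHedge : ∀ e ∈ ((⊤ : G.Subgraph).induce S).edgeSet,
      ∃ a b : V, e = s(a, b) ∧ a ∈ S ∧ b ∈ S ∧ G.Adj a b := by
    intro e he
    obtain ⟨a, b, rfl⟩ := sym2_cases e
    obtain ⟨h1, h2, h3⟩ := (hHadj a b).mp (SimpleGraph.Subgraph.mem_edgeSet.mp he)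
    exact ⟨a, b, rfl, h1, h2, h3⟩
  -- the set of green-touch times of an inner edge, given agreement below t
  have hMEASset : ∀ t : ℝ,
      (∀ s, 0 ≤ s → s < t → ∀ v ∈ S, ev.col s v = (if ρ v ≤ s then Color.red else Color.green)) →
      ∀ a b : V, a ∈ S → b ∈ S →
      {s : ℝ | 0 ≤ s ∧ s < t ∧ greenTouch ev.col s s(a, b)} =
        Ico 0 (min t (max (ρ a) (ρ b))) := by
    intro t hag a b ha hb
    ext s
    simp only [Set.mem_setOf_eq, Set.mem_Ico]
    constructor
    · rintro ⟨hs0, hst, hgt⟩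
      have hgt2 : ∃ v ∈ s(a, b), ev.col s v = Color.green := hgt
      obtain ⟨v, hv, hgr⟩ := hgt2
      refine ⟨hs0, lt_min hst ?_⟩
      rcases Sym2.mem_iff.mp hv with rfl | rfl
      · by_cases hρs : ρ v ≤ s
        · rw [hag s hs0 hst v ha, if_pos hρs] at hgr
          exact absurd hgr (by decide)
        · exact lt_max_iff.mpr (Or.inl (not_le.mp hρs))
      · by_cases hρs : ρ v ≤ s
        · rw [hag s hs0 hst v hb, if_pos hρs] at hgr
          exact absurd hgr (by decide)
        · exact lt_max_iff.mpr (Or.inr (not_le.mp hρs))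
    · rintro ⟨hs0, hsmin⟩
      have hst : s < t := lt_of_lt_of_le hsmin (min_le_left _ _)
      have hsM : s < max (ρ a) (ρ b) := lt_of_lt_of_le hsmin (min_le_right _ _)
      refine ⟨hs0, hst, ?_⟩
      rcases lt_max_iff.mp hsM with h | h
      · exact ⟨a, Sym2.mem_mk_left a b,
          by rw [hag s hs0 hst a ha, if_neg (not_le.mpr h)]⟩
      · exact ⟨b, Sym2.mem_mk_right a b,
          by rw [hag s hs0 hst b hb, if_neg (not_le.mpr h)]⟩
  -- open-iff characterization given agreement strictly below t
  have hOPN : ∀ t : ℝ, 0 ≤ t →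
      (∀ s, 0 ≤ s → s < t → ∀ v ∈ S, ev.col s v = (if ρ v ≤ s then Color.red else Color.green)) →
      ∀ e ∈ ((⊤ : G.Subgraph).induce S).edgeSet,
        (ev.opn t e ↔ (τ e ≤ t ∧ τ e ≤ Mfun ρ e)) := by
    intro t ht hag e he
    obtain ⟨a, b, rfl, ha, hb, hab⟩ := hHedge e he
    have hG₀e : s(a, b) ∈ G₀.edgeSet := SimpleGraph.Subgraph.edgeSet_mono hle he
    have hiff := ev.open_iff t ht _ hG₀e
    rw [hτ' _ (Or.inl he)] at hiff
    rw [hiff, hMEASset t hag a b ha hb, Real.volume_Ico, sub_zero, Mfun_mk]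
    have hmin0 : 0 ≤ min t (max (ρ a) (ρ b)) :=
      le_min ht ((hρ0 a ha).trans (le_max_left _ _))
    rw [ENNReal.ofReal_le_ofReal_iff hmin0]
    exact le_min_iff
  -- no outside interference
  have hL2 : ∀ t : ℝ, 0 ≤ t →
      (∀ e ∈ ((⊤ : G.Subgraph).induce S).edgeSet,
        (ev.opn t e ↔ (τ e ≤ t ∧ τ e ≤ Mfun ρ e))) →
      ∀ v w : V, Relation.ReflTransGen (fun a b => G₀.Adj a b ∧ ev.opn t s(a, b)) v w →
      c' w = Color.red → v ∈ S → ρ v ≤ t := by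
    intro t ht hO v w hpath hw
    induction hpath using Relation.ReflTransGen.head_induction_on with
    | refl =>
      intro hvS
      have hcw : c w = Color.red := by rw [← hc' w hvS]; exact hw
      rcases eq_or_ne w R with rfl | hne
      · rw [hρR]; exact ht
      · rw [hgreen w hvS hne] at hcw
        exact absurd hcw (by decide)
    | @head p a hpa hpath' ih =>
      intro hpS
      rcases eq_or_ne p R with rfl | hpR
      · rw [hρR]; exact ht
      · have hGpa : G.Adj p a := G₀.adj_sub hpa.1
        by_cases haS : a ∈ S
        · have hρa : ρ a ≤ t := ih haS
          have hHpa : ((⊤ : G.Subgraph).induce S).Adj p a := (hHadj p a).mpr ⟨hpS, haS, hGpa⟩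
          have hopn := (hO s(p, a) (SimpleGraph.Subgraph.mem_edgeSet.mpr hHpa)).mp hpa.2
          calc ρ p ≤ max (τ s(p, a)) (ρ a) := hρadj p a hpS haS hGpa
          _ ≤ t := max_le hopn.1 hρa
        · have hEbar : s(p, a) ∈ {e | e ∈ G.edgeSet ∧
              ∃ u v : V, e = s(u, v) ∧ u ∈ S ∧ u ≠ R ∧ v ∉ S} :=
            ⟨(SimpleGraph.mem_edgeSet G).mpr hGpa, p, a, rfl, hpS, hpR, haS⟩
          have hG₀e : s(p, a) ∈ G₀.edgeSet := by
            by_contra hno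
            exact ev.closed_outside t _ hno hpa.2
          have hiff := (ev.open_iff t ht _ hG₀e).mp hpa.2
          rw [hτ' _ (Or.inr hEbar)] at hiff
          have hsub : {s : ℝ | 0 ≤ s ∧ s < t ∧ greenTouch ev.col s s(p, a)} ⊆ Ico 0 t := by
            rintro s ⟨h1, h2, _⟩; exact ⟨h1, h2⟩
          have hvol : volume {s : ℝ | 0 ≤ s ∧ s < t ∧ greenTouch ev.col s s(p, a)} ≤
              ENNReal.ofReal t := by
            calc volume {s : ℝ | 0 ≤ s ∧ s < t ∧ greenTouch ev.col s s(p, a)}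
                ≤ volume (Ico 0 t) := measure_mono hsub
            _ = ENNReal.ofReal t := by rw [Real.volume_Ico, sub_zero]
          have hτt : τ s(p, a) ≤ t :=
            (ENNReal.ofReal_le_ofReal_iff ht).mp (hiff.trans hvol)
          exact (hkey p hpS hpR a haS hGpa).trans hτt
  -- colour characterization given open characterization
  have hCOL : ∀ t : ℝ, 0 ≤ t →
      (∀ e ∈ ((⊤ : G.Subgraph).induce S).edgeSet,
        (ev.opn t e ↔ (τ e ≤ t ∧ τ e ≤ Mfun ρ e))) →
      ∀ v ∈ S, ev.col t v = (if ρ v ≤ t then Color.red else Color.green) := by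
    intro t ht hO v hv
    have hvG₀ : v ∈ G₀.verts := hle.1 (hHverts.symm ▸ hv)
    by_cases hρt : ρ v ≤ t
    · rw [if_pos hρt]
      rw [ev.red_iff t ht v hvG₀]
      refine ⟨R, ?_, by rw [hc' R hRS]; exact hcR⟩
      have hpath := hL1 v hv t hρt
      refine Relation.ReflTransGen.mono ?_ _ _ hpath
      rintro p q ⟨⟨hpS', hqS', hG⟩, h1, h2⟩
      have hHpq : ((⊤ : G.Subgraph).induce S).Adj p q := (hHadj p q).mpr ⟨hpS', hqS', hG⟩
      refine ⟨hle.2 hHpq, ?_⟩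
      exact (hO s(p, q) (SimpleGraph.Subgraph.mem_edgeSet.mpr hHpq)).mpr
        ⟨h1, by rw [Mfun_mk]; exact h2⟩
    · rw [if_neg hρt]
      have hnred : ev.col t v ≠ Color.red := by
        intro hred
        obtain ⟨w, hconn, hw⟩ := (ev.red_iff t ht v hvG₀).mp hred
        exact hρt (hL2 t ht hO v w hconn hw hv)
      have hnwhite : ev.col t v ≠ Color.white := by
        intro hwh
        have hwt := (ev.white_iff t ht v hvG₀).mp hwh
        rw [hc' v hv] at hwt
        exact hnwS v hv hwt.1
      cases hcol : ev.col t v with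
      | white => exact absurd hcol hnwhite
      | red => exact absurd hcol hnred
      | green => rfl
  -- small-time advance of the open characterization
  have hADV : ∀ T : ℝ, 0 ≤ T →
      (∀ s, 0 ≤ s → s ≤ T → ∀ v ∈ S, ev.col s v = (if ρ v ≤ s then Color.red else Color.green)) →
      ∃ ε : ℝ, 0 < ε ∧ ∀ t, T < t → t < T + ε →
        ∀ e ∈ ((⊤ : G.Subgraph).induce S).edgeSet,
          (ev.opn t e ↔ (τ e ≤ t ∧ τ e ≤ Mfun ρ e)) := by
    intro T hT hag
    have hagT : ∀ s, 0 ≤ s → s < T → ∀ v ∈ S,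
        ev.col s v = (if ρ v ≤ s then Color.red else Color.green) :=
      fun s h1 h2 => hag s h1 h2.le
    have hHfin : ((⊤ : G.Subgraph).induce S).edgeSet.Finite := Set.toFinite _
    set Fe : Finset (Sym2 V) := hHfin.toFinset with hFe
    set cand : Finset ℝ := insert (1 : ℝ)
      ((Fe.filter (fun e => min T (Mfun ρ e) < τ e)).image
        (fun e => τ e - min T (Mfun ρ e))) with hcand
    have hcne : cand.Nonempty := ⟨1, Finset.mem_insert_self _ _⟩
    refine ⟨cand.min' hcne, ?_, ?_⟩
    · rw [Finset.lt_min'_iff]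
      intro y hy
      rw [hcand] at hy
      rcases Finset.mem_insert.mp hy with rfl | hy
      · exact one_pos
      · obtain ⟨e, hef, rfl⟩ := Finset.mem_image.mp hy
        have hfil := (Finset.mem_filter.mp hef).2
        linarith
    · intro t htT htε e he
      obtain ⟨a, b, rfl, ha, hb, hab⟩ := hHedge e he
      have hG₀e : s(a, b) ∈ G₀.edgeSet := SimpleGraph.Subgraph.edgeSet_mono hle he
      have hiff := ev.open_iff t (hT.trans htT.le) _ hG₀e
      rw [hτ' _ (Or.inl he)] at hiff
      have hMab : Mfun ρ s(a, b) = max (ρ a) (ρ b) := Mfun_mk ρ a b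
      have hminT0 : 0 ≤ min T (max (ρ a) (ρ b)) :=
        le_min hT ((hρ0 a ha).trans (le_max_left _ _))
      have hvolT : volume {s : ℝ | 0 ≤ s ∧ s < T ∧ greenTouch ev.col s s(a, b)} =
          ENNReal.ofReal (min T (max (ρ a) (ρ b))) := by
        rw [hMEASset T hagT a b ha hb, Real.volume_Ico, sub_zero]
      by_cases hcase : τ s(a, b) ≤ min T (max (ρ a) (ρ b))
      · have hsub : {s : ℝ | 0 ≤ s ∧ s < T ∧ greenTouch ev.col s s(a, b)} ⊆
            {s : ℝ | 0 ≤ s ∧ s < t ∧ greenTouch ev.col s s(a, b)} := by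
          rintro s ⟨h1, h2, h3⟩; exact ⟨h1, h2.trans htT, h3⟩
        have hopn : ev.opn t s(a, b) := by
          rw [hiff]
          calc ENNReal.ofReal (τ s(a, b)) ≤ ENNReal.ofReal (min T (max (ρ a) (ρ b))) :=
            ENNReal.ofReal_le_ofReal hcase
          _ = volume {s : ℝ | 0 ≤ s ∧ s < T ∧ greenTouch ev.col s s(a, b)} := hvolT.symm
          _ ≤ volume {s : ℝ | 0 ≤ s ∧ s < t ∧ greenTouch ev.col s s(a, b)} :=
            measure_mono hsub
        have h2 : τ s(a, b) ≤ t := (hcase.trans (min_le_left _ _)).trans htT.le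
        have h3 : τ s(a, b) ≤ Mfun ρ s(a, b) := by
          rw [hMab]; exact hcase.trans (min_le_right _ _)
        exact iff_of_true hopn ⟨h2, h3⟩
      · push_neg at hcase
        have hemem : s(a, b) ∈ Fe := by rw [hFe]; exact hHfin.mem_toFinset.mpr he
        have hefil : s(a, b) ∈ Fe.filter (fun e => min T (Mfun ρ e) < τ e) :=
          Finset.mem_filter.mpr ⟨hemem, by rw [hMab]; exact hcase⟩
        have hεle : cand.min' hcne ≤ τ s(a, b) - min T (max (ρ a) (ρ b)) := by
          refine Finset.min'_le _ _ ?_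
          rw [hcand]
          refine Finset.mem_insert_of_mem (Finset.mem_image.mpr ⟨s(a, b), hefil, ?_⟩)
          rw [hMab]
        have hsplit : {s : ℝ | 0 ≤ s ∧ s < t ∧ greenTouch ev.col s s(a, b)} ⊆
            {s : ℝ | 0 ≤ s ∧ s < T ∧ greenTouch ev.col s s(a, b)} ∪ Ico T t := by
          rintro s ⟨h1, h2, h3⟩
          by_cases hsT : s < T
          · exact Or.inl ⟨h1, hsT, h3⟩
          · exact Or.inr ⟨not_lt.mp hsT, h2⟩
        have hvol : volume {s : ℝ | 0 ≤ s ∧ s < t ∧ greenTouch ev.col s s(a, b)} ≤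
            ENNReal.ofReal (min T (max (ρ a) (ρ b)) + (t - T)) := by
          calc volume {s : ℝ | 0 ≤ s ∧ s < t ∧ greenTouch ev.col s s(a, b)}
              ≤ volume ({s : ℝ | 0 ≤ s ∧ s < T ∧ greenTouch ev.col s s(a, b)} ∪ Ico T t) :=
            measure_mono hsplit
          _ ≤ volume {s : ℝ | 0 ≤ s ∧ s < T ∧ greenTouch ev.col s s(a, b)} +
              volume (Ico T t) := measure_union_le _ _
          _ = ENNReal.ofReal (min T (max (ρ a) (ρ b))) + ENNReal.ofReal (t - T) := by
              rw [hvolT, Real.volume_Ico]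
          _ = ENNReal.ofReal (min T (max (ρ a) (ρ b)) + (t - T)) :=
            (ENNReal.ofReal_add hminT0 (by linarith)).symm
        have hlt : min T (max (ρ a) (ρ b)) + (t - T) < τ s(a, b) := by linarith
        have hnopen : ¬ ev.opn t s(a, b) := by
          rw [hiff]
          intro hcon
          have hb2 := hcon.trans hvol
          rw [ENNReal.ofReal_le_ofReal_iff (by linarith)] at hb2
          linarith
        have hnright : ¬ (τ s(a, b) ≤ t ∧ τ s(a, b) ≤ Mfun ρ s(a, b)) := by
          rintro ⟨h2, h3⟩
          rw [hMab] at h3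
          have hTM : min T (max (ρ a) (ρ b)) = T := by
            rcases min_cases T (max (ρ a) (ρ b)) with ⟨h4, _⟩ | ⟨h4, h5⟩
            · exact h4
            · exfalso; rw [h4] at hcase; exact absurd h3 (not_le.mpr hcase)
          rw [hTM] at hεle
          linarith
        exact iff_of_false hnopen hnright
  -- the real-induction wrap-up
  intro t0 ht0
  by_contra hcon
  set B : Set ℝ := {t : ℝ | 0 ≤ t ∧
    ¬ ((∀ v ∈ S, ev.col t v = (if ρ v ≤ t then Color.red else Color.green)) ∧
      (∀ e ∈ ((⊤ : G.Subgraph).induce S).edgeSet,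
        (ev.opn t e ↔ (τ e ≤ t ∧ τ e ≤ Mfun ρ e))))} with hB
  have hBne : B.Nonempty := ⟨t0, ht0, hcon⟩
  have hBbdd : BddBelow B := ⟨0, fun b hb => hb.1⟩
  set T := sInf B with hTdef
  have hT0 : 0 ≤ T := le_csInf hBne (fun b hb => hb.1)
  have hbelow : ∀ s, 0 ≤ s → s < T →
      ((∀ v ∈ S, ev.col s v = (if ρ v ≤ s then Color.red else Color.green)) ∧
      (∀ e ∈ ((⊤ : G.Subgraph).induce S).edgeSet,
        (ev.opn s e ↔ (τ e ≤ s ∧ τ e ≤ Mfun ρ e)))) := by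
    intro s hs0 hsT
    by_contra hbad
    have hsB : s ∈ B := ⟨hs0, hbad⟩
    exact absurd (csInf_le hBbdd hsB) (not_le.mpr hsT)
  have hOT := hOPN T hT0 (fun s h1 h2 => (hbelow s h1 h2).1)
  have hAT := hCOL T hT0 hOT
  have hagT : ∀ s, 0 ≤ s → s ≤ T → ∀ v ∈ S,
      ev.col s v = (if ρ v ≤ s then Color.red else Color.green) := by
    intro s h1 h2
    rcases eq_or_lt_of_le h2 with rfl | hlt
    · exact hAT
    · exact (hbelow s h1 hlt).1
  obtain ⟨ε, hε, hADVε⟩ := hADV T hT0 hagT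
  have hgood : ∀ t, 0 ≤ t → t < T + ε →
      ((∀ v ∈ S, ev.col t v = (if ρ v ≤ t then Color.red else Color.green)) ∧
      (∀ e ∈ ((⊤ : G.Subgraph).induce S).edgeSet,
        (ev.opn t e ↔ (τ e ≤ t ∧ τ e ≤ Mfun ρ e)))) := by
    intro t h0 hlt
    rcases lt_trichotomy t T with h | rfl | h
    · exact hbelow t h0 h
    · exact ⟨hAT, hOT⟩
    · have hOt := hADVε t h hlt
      exact ⟨hCOL t h0 hOt, hOt⟩
  have hTlt : sInf B < T + ε := by rw [← hTdef]; linarith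
  obtain ⟨bB, hbBmem, hbBlt⟩ := (csInf_lt_iff hBbdd hBne).mp hTlt
  exact hbBmem.2 (hgood bB hbBmem.1 hbBlt)


end Statement9Aux

/-- In the finite growth model with no white vertices, the pair
`(T̂(x), Ē)` — the subgraph of `G` induced on the vertex set of the stopped invasion tree
`T(x)`, together with the set of edges of `G` having exactly one end-vertex in `T(x)`, that
end-vertex different from `R` — is autonomous. -/
theorem statement9
    {V : Type*} [Fintype V] (G : SimpleGraph V) (hconn : G.Connected)
    (c : V → Color) (hnw : ∀ v, c v ≠ Color.white)
    (hg : ∃ v, c v = Color.green) (hr : ∃ v, c v = Color.red)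
    (τ : Sym2 V → ℝ) (hτpos : ∀ e ∈ G.edgeSet, 0 < τ e)
    (hτinj : ∀ e ∈ G.edgeSet, ∀ f ∈ G.edgeSet, τ e = τ f → e = f)
    (x : V) (hx : c x = Color.green)
    (E : ℕ → Sym2 V) (m : ℕ) (R : V) (hinv : StoppedInvasion G c τ x E m R) :
    Autonomous G c τ ((⊤ : G.Subgraph).induce (treeVerts x E m))
      {e | e ∈ G.edgeSet ∧ ∃ u v : V, e = s(u, v) ∧
        u ∈ treeVerts x E m ∧ u ≠ R ∧ v ∉ treeVerts x E m} := by
  classical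
  obtain ⟨ρ, hρ0, hRS, hgreen, hρR, hρadj, hkey, hL1⟩ :=
    static_exists G c hnw τ hτpos x hx E m R hinv
  have hcR : c R = Color.red := hinv.2.2.2.2.2
  refine ⟨Set.toFinite _, Set.toFinite _, ?_, ?_⟩
  · rintro e ⟨heG, u, v, rfl, huS, huR, hvS⟩
    refine ⟨heG, u, ⟨Sym2.mem_mk_left u v, ?_⟩, ?_⟩
    · rw [SimpleGraph.Subgraph.induce_verts]; exact huS
    · rintro y ⟨hy, hyH⟩
      rw [SimpleGraph.Subgraph.induce_verts] at hyH
      rcases Sym2.mem_iff.mp hy with rfl | rfl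
      · rfl
      · exact absurd hyH hvS
  · refine ⟨fun t v => if ρ v ≤ t then Color.red else Color.green,
      fun t e => τ e ≤ t ∧ τ e ≤ Mfun ρ e, ?_⟩
    intro G₀ hG₀fin hle hEb c' τ' hc' hτ' ev
    have hc'S : ∀ v ∈ treeVerts x E m, c' v = c v := by
      intro v hv
      exact hc' v (by rw [SimpleGraph.Subgraph.induce_verts]; exact hv)
    have hall := dyn_agree G c τ hτpos (treeVerts x E m) R hRS hcR hgreen
      (fun v _ => hnw v) ρ hρ0 hρR hρadj hkey hL1 G₀ hle c' τ' hc'S hτ' ev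
    constructor
    · intro t ht v hv
      rw [SimpleGraph.Subgraph.induce_verts] at hv
      exact (hall t ht).1 v hv
    · intro t ht e he
      exact (hall t ht).2 e he
end RandomSpatialGrowth
end

section
/- In the finite growth model with no white vertices, for an initially green vertex x, the time t(x) at which x becomes red satisfies t(x) = min over all paths π in G from x to an initially red vertex of (max over edges e of π of τ(e)). -/
open MeasureTheory ProbabilityTheory Set
open scoped ENNReal

namespace RandomSpatialGrowth

variable {V : Type*}

section Aux

variable {G : SimpleGraph V} {c : V → Color} {τ : Sym2 V → ℝ}
  (ev : Evolution (⊤ : G.Subgraph) c τ)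

lemma aux_not_white (hnw : ∀ v, c v ≠ Color.white) (t : ℝ) (ht : 0 ≤ t) (v : V) :
    ev.col t v ≠ Color.white := fun h =>
  hnw v ((ev.white_iff t ht v (Set.mem_univ v)).1 h).1

lemma aux_green_of_ne_red (hnw : ∀ v, c v ≠ Color.white) (t : ℝ) (ht : 0 ≤ t) (v : V)
    (h : ev.col t v ≠ Color.red) : ev.col t v = Color.green := by
  cases hcol : ev.col t v with
  | white => exact absurd hcol (aux_not_white ev hnw t ht v)
  | red => exact absurd hcol h
  | green => rfl

lemma aux_opn_mono {s t : ℝ} (hs : 0 ≤ s) (hst : s ≤ t) {e : Sym2 V}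
    (he : e ∈ G.edgeSet) (h : ev.opn s e) : ev.opn t e := by
  have he' : e ∈ (⊤ : G.Subgraph).edgeSet := by
    rwa [SimpleGraph.Subgraph.edgeSet_top]
  rw [ev.open_iff s hs e he'] at h
  rw [ev.open_iff t (hs.trans hst) e he']
  refine le_trans h (measure_mono ?_)
  rintro r ⟨h1, h2, h3⟩
  exact ⟨h1, h2.trans_le hst, h3⟩

lemma aux_red_mono {s t : ℝ} (hs : 0 ≤ s) (hst : s ≤ t) (v : V)
    (h : ev.col s v = Color.red) : ev.col t v = Color.red := by
  rw [ev.red_iff s hs v (Set.mem_univ v)] at h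
  obtain ⟨w, hw, hcw⟩ := h
  rw [ev.red_iff t (hs.trans hst) v (Set.mem_univ v)]
  refine ⟨w, Relation.ReflTransGen.mono (fun a b hab => ?_) _ _ hw, hcw⟩
  exact ⟨hab.1, aux_opn_mono ev hs hst (SimpleGraph.mem_edgeSet _ |>.2 hab.1.adj_sub) hab.2⟩

lemma aux_tau_le_of_opn {t : ℝ} (ht : 0 ≤ t) {e : Sym2 V} (he : e ∈ G.edgeSet)
    (h : ev.opn t e) : τ e ≤ t := by
  have he' : e ∈ (⊤ : G.Subgraph).edgeSet := by
    rwa [SimpleGraph.Subgraph.edgeSet_top]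
  rw [ev.open_iff t ht e he'] at h
  have h2 : volume {s : ℝ | 0 ≤ s ∧ s < t ∧ greenTouch ev.col s e} ≤ volume (Ico 0 t) :=
    measure_mono fun r hr => ⟨hr.1, hr.2.1⟩
  rw [Real.volume_Ico, sub_zero] at h2
  exact (ENNReal.ofReal_le_ofReal_iff ht).1 (h.trans h2)

lemma aux_red_of_walk (hnw : ∀ v, c v ≠ Color.white) (t : ℝ) (ht : 0 ≤ t) :
    ∀ {v y : V} (p : G.Walk v y), c y = Color.red →
      (∀ e ∈ p.edges, τ e ≤ t) → ev.col t v = Color.red := by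
  intro v y p
  induction p with
  | @nil z =>
    intro hy _
    rw [ev.red_iff t ht _ (Set.mem_univ _)]
    exact ⟨z, Relation.ReflTransGen.refl, hy⟩
  | @cons u v' y' h q ih =>
    intro hy hτle
    have hv : ev.col t v' = Color.red := ih hy fun e he => hτle e (by simp [he])
    have hτe : τ s(u, v') ≤ t := hτle _ (by simp)
    by_cases hB : ∃ s, 0 ≤ s ∧ s < t ∧ ¬ greenTouch ev.col s s(u, v')
    · obtain ⟨s, hs0, hst, hng⟩ := hB
      have hured : ev.col s u = Color.red := by
        by_contra hne
        exact hng ⟨u, by simp, aux_green_of_ne_red ev hnw s hs0 u hne⟩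
      exact aux_red_mono ev hs0 hst.le u hured
    · push_neg at hB
      have hset : {s : ℝ | 0 ≤ s ∧ s < t ∧ greenTouch ev.col s s(u, v')} = Ico 0 t := by
        ext s
        constructor
        · rintro ⟨h1, h2, _⟩; exact ⟨h1, h2⟩
        · rintro ⟨h1, h2⟩; exact ⟨h1, h2, hB s h1 h2⟩
      have he' : s(u, v') ∈ (⊤ : G.Subgraph).edgeSet := by
        rw [SimpleGraph.Subgraph.edgeSet_top]; exact h
      have hopen : ev.opn t s(u, v') := by
        rw [ev.open_iff t ht _ he', hset, Real.volume_Ico, sub_zero]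
        exact ENNReal.ofReal_le_ofReal hτe
      rw [ev.red_iff t ht v' (Set.mem_univ _)] at hv
      obtain ⟨w', hconn', hcw'⟩ := hv
      rw [ev.red_iff t ht u (Set.mem_univ _)]
      refine ⟨w', Relation.ReflTransGen.head ⟨?_, hopen⟩ hconn', hcw'⟩
      rwa [SimpleGraph.Subgraph.top_adj]

lemma aux_walk_of_openConn (t : ℝ) {u w : V}
    (h : openConn (⊤ : G.Subgraph) ev.opn t u w) :
    ∃ p : G.Walk u w, ∀ e ∈ p.edges, ev.opn t e := by
  induction h with
  | refl => exact ⟨SimpleGraph.Walk.nil, by simp⟩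
  | @tail b d hab hbd ih =>
    obtain ⟨p, hp⟩ := ih
    have hadj : G.Adj b d := hbd.1.adj_sub
    refine ⟨p.concat hadj, fun e he => ?_⟩
    rw [SimpleGraph.Walk.edges_concat, List.concat_eq_append, List.mem_append] at he
    rcases he with he | he
    · exact hp e he
    · rw [List.mem_singleton] at he
      subst he
      exact hbd.2

end Aux

/-- In the finite growth model with no white vertices, the time `t(x)` at
which an initially green vertex `x` becomes red equals the minimum, over all paths `π` from
`x` to an initially red vertex, of the maximal `τ`-value of an edge of `π`. -/
theorem statement10
    {V : Type*} [Fintype V] (G : SimpleGraph V) (hconn : G.Connected)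
    (c : V → Color) (hnw : ∀ v, c v ≠ Color.white)
    (hg : ∃ v, c v = Color.green) (hr : ∃ v, c v = Color.red)
    (τ : Sym2 V → ℝ) (hτpos : ∀ e ∈ G.edgeSet, 0 < τ e)
    (hτinj : ∀ e ∈ G.edgeSet, ∀ f ∈ G.edgeSet, τ e = τ f → e = f)
    (x : V) (hx : c x = Color.green)
    (ev : Evolution (⊤ : G.Subgraph) c τ) (t₀ : ℝ) (ht₀ : becomesRedAt ev x t₀) :
    IsLeast {r : ℝ | ∃ (y : V) (p : G.Walk x y), c y = Color.red ∧
      IsGreatest (τ '' {e | e ∈ p.edges}) r} t₀ := by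
  classical
  obtain ⟨ht0, hredx, hmin⟩ := ht₀
  have hlb : ∀ r ∈ {r : ℝ | ∃ (y : V) (p : G.Walk x y), c y = Color.red ∧
      IsGreatest (τ '' {e | e ∈ p.edges}) r}, t₀ ≤ r := by
    rintro r ⟨y, p, hy, ⟨⟨e₀, he₀, hre⟩, hub⟩⟩
    have hr0 : 0 ≤ r := hre ▸ (hτpos e₀ (p.edges_subset_edgeSet he₀)).le
    have hred : ev.col r x = Color.red :=
      aux_red_of_walk ev hnw r hr0 p hy fun e he => hub ⟨e, he, rfl⟩
    by_contra hlt
    push_neg at hlt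
    exact hmin r hr0 hlt hred
  obtain ⟨w, hconn, hcw⟩ := (ev.red_iff t₀ ht0 x (Set.mem_univ x)).1 hredx
  obtain ⟨p, hp⟩ := aux_walk_of_openConn ev t₀ hconn
  have hedge : ∀ e ∈ p.edges, τ e ≤ t₀ := fun e he =>
    aux_tau_le_of_opn ev ht0 (p.edges_subset_edgeSet he) (hp e he)
  have hne : p.edges ≠ [] := by
    intro hnil
    have hxw : x = w := p.eq_of_length_eq_zero (by
      rw [← SimpleGraph.Walk.length_edges, hnil]; rfl)
    rw [← hxw, hx] at hcw
    exact Color.noConfusion hcw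
  obtain ⟨e₁, he₁⟩ := List.exists_mem_of_ne_nil _ hne
  have hsne : p.edges.toFinset.Nonempty := ⟨e₁, List.mem_toFinset.2 he₁⟩
  obtain ⟨e₀, he₀, hmax⟩ := Finset.exists_max_image p.edges.toFinset τ hsne
  rw [List.mem_toFinset] at he₀
  have hmax' : ∀ e ∈ p.edges, τ e ≤ τ e₀ := fun e he => hmax e (List.mem_toFinset.2 he)
  have hr0 : 0 ≤ τ e₀ := (hτpos e₀ (p.edges_subset_edgeSet he₀)).le
  have hred : ev.col (τ e₀) x = Color.red := aux_red_of_walk ev hnw (τ e₀) hr0 p hcw hmax'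
  have hle : τ e₀ ≤ t₀ := hedge e₀ he₀
  have heq : τ e₀ = t₀ := by
    rcases lt_or_eq_of_le hle with hlt | heq
    · exact absurd hred (hmin (τ e₀) hr0 hlt)
    · exact heq
  refine ⟨⟨w, p, hcw, ⟨⟨e₀, he₀, heq⟩, ?_⟩⟩, hlb⟩
  rintro a ⟨e, he, rfl⟩
  exact heq ▸ hmax' e he
end RandomSpatialGrowth
end
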